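/- arXiv:math/0112307 — 5 statements merged into one kernel-verified Lean document; each statement's English description precedes it below -/
import Mathlib

section
/- Let F : C → D be a monoidal (or semigroupal) functor between semigroupal categories. Then postcomposition with F induces a cochain map ⌈F(−)⌉ : X^•(C) → X^•(F) from the deformation complex of C to the deformation complex of F, commuting with the coboundary maps. -/
open CategoryTheory MonoidalCategory CategoryTheory.Functor.LaxMonoidal

universe v₁ v₂ u₁ u₂

namespace DeformationComplex

variable {C : Type u₁} [Category.{v₁} C] [MonoidalCategory C]
  {D : Type u₂} [Category.{v₂} D] [MonoidalCategory D]

/-- Right-parenthesized iterated tensor product `⊗ⁿ` of a list of objects. -/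
def tPow : List C → C
  | [] => 𝟙_ C
  | a :: l => a ⊗ tPow l

variable (F : C ⥤ D) [F.LaxMonoidal]

/-- The functor `⊗ⁿ ∘ Fⁿ` on objects: `F(A₁) ⊗ (F(A₂) ⊗ ⋯)`. -/
def tF : List C → D
  | [] => 𝟙_ D
  | a :: l => F.obj a ⊗ tF l

/-- Lists of morphisms between pointwise matching lists of objects. -/
inductive HomList : List C → List C → Type (max u₁ v₁)
  | nil : HomList [] []
  | cons {a b : C} {l m : List C} (f : a ⟶ b) (fs : HomList l m) : HomList (a :: l) (b :: m)

/-- Action of `⊗ⁿ` on a list of morphisms. -/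
def tPowMap : ∀ {A B : List C}, HomList A B → (tPow A ⟶ tPow B)
  | _, _, .nil => 𝟙 (𝟙_ C)
  | _, _, .cons f fs => f ⊗ₘ tPowMap fs

/-- Action of `⊗ⁿ ∘ Fⁿ` on a list of morphisms. -/
def tFMap : ∀ {A B : List C}, HomList A B → (tF F A ⟶ tF F B)
  | _, _, .nil => 𝟙 (𝟙_ D)
  | _, _, .cons f fs => F.map f ⊗ₘ tFMap fs

/-- A (not yet graded) cochain for the deformation complex of `F`: a family of morphisms
`F(A₁) ⊗ ⋯ ⊗ F(Aₙ) ⟶ F(A₁ ⊗ ⋯ ⊗ Aₙ)` indexed by lists of objects of `C`.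
The degree-`n` cochain group `Xⁿ(F) = Nat(⊗ⁿ(Fⁿ), F(⊗ⁿ))` consists of the values on lists
of length `n` of such families that are natural (see `Natural`). -/
abbrev Fam : Type _ := ∀ A : List C, tF F A ⟶ F.obj (tPow A)

/-- Naturality: a `Fam` is a natural transformation `⊗ⁿ(Fⁿ) ⟶ F(⊗ⁿ)` in each degree. -/
def Natural (φ : Fam F) : Prop :=
  ∀ {A B : List C} (fs : HomList A B), tFMap F fs ≫ φ B = φ A ≫ F.map (tPowMap fs)

/-- The list obtained by tensoring the entries in positions `i, i+1`. -/
def mergeAt : List C → ℕ → List C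
  | a :: b :: l, 0 => (a ⊗ b) :: l
  | a :: b :: l, i + 1 => a :: mergeAt (b :: l) i
  | [], _ => []
  | [a], _ => [a]

/-- The padding morphism `tF A ⟶ tF (mergeAt A i)` given by a prolongation of the structure
map `F̃` (and an associator). -/
def mergeHom : ∀ (A : List C) (i : ℕ), tF F A ⟶ tF F (mergeAt A i)
  | a :: b :: l, 0 => (α_ (F.obj a) (F.obj b) (tF F l)).inv ≫ (μ F a b ▷ tF F l)
  | a :: b :: l, i + 1 => F.obj a ◁ mergeHom (b :: l) i
  | [], _ => 𝟙 _
  | [a], _ => 𝟙 _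

/-- The corresponding coherence morphism `tPow (mergeAt A i) ⟶ tPow A` in `C`. -/
def mergePad : ∀ (A : List C) (i : ℕ), tPow (mergeAt A i) ⟶ tPow A
  | a :: b :: l, 0 => (α_ a b (tPow l)).hom
  | a :: b :: l, i + 1 => a ◁ mergePad (b :: l) i
  | [], _ => 𝟙 _
  | [a], _ => 𝟙 _

/-- Splitting isomorphism `tF (A ++ [a]) ≅ tF A ⊗ F a`. -/
def splitF : ∀ (A : List C) (a : C), tF F (A ++ [a]) ≅ tF F A ⊗ F.obj a
  | [], a => (ρ_ (F.obj a)) ≪≫ (λ_ (F.obj a)).symm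
  | b :: A, a => whiskerLeftIso (F.obj b) (splitF A a) ≪≫ (α_ _ _ _).symm

/-- Splitting isomorphism `tPow (A ++ [a]) ≅ tPow A ⊗ a` in `C`. -/
def splitC : ∀ (A : List C) (a : C), (tPow (A ++ [a]) : C) ≅ tPow A ⊗ a
  | [], a => (ρ_ a) ≪≫ (λ_ a).symm
  | b :: A, a => whiskerLeftIso b (splitC A a) ≪≫ (α_ _ _ _).symm

variable [Preadditive D]

/-- The last face `⌈φ_{A₀,…,A_{n-1}} ⊗ F(Aₙ)⌉` of the deformation coboundary, padded by
structure maps (associators, unitors and `F̃`). -/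
def lastFace (φ : Fam F) (A : List C) (h : A ≠ []) : tF F A ⟶ F.obj (tPow A) :=
  eqToHom (congrArg (tF F) (List.dropLast_append_getLast h).symm)
    ≫ (splitF F A.dropLast (A.getLast h)).hom
    ≫ (φ A.dropLast ▷ F.obj (A.getLast h))
    ≫ μ F (tPow A.dropLast) (A.getLast h)
    ≫ F.map ((splitC A.dropLast (A.getLast h)).inv)
    ≫ F.map (eqToHom (congrArg tPow (List.dropLast_append_getLast h)))

/-- The deformation coboundary
`(δφ)_{A₀,…,Aₙ} = ⌈F(A₀) ⊗ φ_{A₁,…,Aₙ}⌉ + Σᵢ (−1)ⁱ ⌈φ_{…,A_{i-1} ⊗ A_i,…}⌉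
  + (−1)ⁿ⁺¹ ⌈φ_{A₀,…,A_{n-1}} ⊗ F(Aₙ)⌉`. -/
def firstFace (φ : Fam F) (a : C) (l : List C) : tF F (a :: l) ⟶ F.obj (tPow (a :: l)) :=
  (F.obj a ◁ φ l) ≫ μ F a (tPow l)

/-- The `i`-th inner face `⌈φ_{A₀,…,A_{i-1} ⊗ A_i,…,Aₙ}⌉`, padded by `F̃` and associators. -/
def innerFace (φ : Fam F) (A : List C) (i : ℕ) : tF F A ⟶ F.obj (tPow A) :=
  mergeHom F A i ≫ φ (mergeAt A i) ≫ F.map (mergePad A i)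

/-- The deformation coboundary
`(δφ)_{A₀,…,Aₙ} = ⌈F(A₀) ⊗ φ_{A₁,…,Aₙ}⌉ + Σᵢ (−1)ⁱ ⌈φ_{…,A_{i-1} ⊗ A_i,…}⌉
  + (−1)ⁿ⁺¹ ⌈φ_{A₀,…,A_{n-1}} ⊗ F(Aₙ)⌉`. -/
def d (φ : Fam F) : Fam F := fun A =>
  match A with
  | [] => 0
  | a :: l =>
      firstFace F φ a l
      + (∑ i ∈ Finset.range l.length,
          ((-1 : ℤ) ^ (i + 1)) • innerFace F φ (a :: l) i)
      + ((-1 : ℤ) ^ (l.length + 1)) • lastFace F φ (a :: l) (by simp)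

end DeformationComplex

/-!
STATEMENT 8: For a monoidal (or semigroupal) functor `F : C ⥤ D`, postcomposition with `F`
induces a cochain map `⌈F(−)⌉ : X^•(C) → X^•(F)` from the deformation complex of `C` to the
deformation complex of `F`, sending `φ ∈ Nat(⊗ⁿ, ⊗ⁿ)` to the padded natural transformation
with components `⌈F(φ_{A₁,…,Aₙ})⌉`; it commutes with the coboundary maps.

Here `X^•(C) = X^•(Id_C)` is realized as the deformation complex of the identity functor
`𝟭 C` with its (identity) lax monoidal structure, and the padding is by prolongations of
the structure maps `F̃`, `F₀`.
-/

namespace DeformationComplex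

open CategoryTheory MonoidalCategory CategoryTheory.Functor.LaxMonoidal

variable {C : Type u₁} [Category.{v₁} C] [MonoidalCategory C]
  {D : Type u₂} [Category.{v₂} D] [MonoidalCategory D]
  (F : C ⥤ D) [F.LaxMonoidal]

/-- The canonical padding `⊗ⁿ(Fⁿ) ⟶ F(⊗ⁿ)` built from prolongations of `F̃` and `F₀`. -/
def muPow : ∀ A : List C, tF F A ⟶ F.obj (tPow A)
  | [] => ε F
  | a :: l => (F.obj a ◁ muPow l) ≫ μ F a (tPow l)

lemma tF_id' (A : List C) : tPow A = tF (𝟭 C) A := by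
  induction A with
  | nil => rfl
  | cons a l ih => show a ⊗ tPow l = a ⊗ tF (𝟭 C) l; rw [ih]

/-- Postcomposition with `F`: the cochain map `⌈F(−)⌉ : X^•(C) → X^•(F)`. -/
def resPost (φ : Fam (𝟭 C)) : Fam F := fun A =>
  muPow F A ≫ F.map (eqToHom (tF_id' A) ≫ φ A)

/-! ### Auxiliary lemmas -/

lemma aux_eqToHom_self {x : C} (h : x = x) : eqToHom h = 𝟙 x := by simp

lemma aux_whiskerLeft_eqToHom (a : C) {x y : C} (h : x = y) :
    a ◁ eqToHom h = eqToHom (congrArg (a ⊗ ·) h) := by subst h; simp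

lemma aux_eqToHom_tF_cons (a : C) (l : List C) :
    eqToHom (tF_id' (a :: l)) =
      (a ◁ eqToHom (tF_id' l) : a ⊗ tPow l ⟶ a ⊗ tF (𝟭 C) l) := by
  rw [aux_whiskerLeft_eqToHom]
  rfl

lemma aux_muPow_natural : ∀ {A B : List C} (fs : HomList A B),
    tFMap F fs ≫ muPow F B = muPow F A ≫ F.map (tPowMap fs)
  | _, _, .nil => by
    show 𝟙 (𝟙_ D) ≫ ε F = ε F ≫ F.map (𝟙 (𝟙_ C))
    simp
  | _, _, .cons f fs => by
    show (F.map f ⊗ₘ tFMap F fs) ≫ (_ ◁ muPow F _) ≫ μ F _ _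
      = ((_ ◁ muPow F _) ≫ μ F _ _) ≫ F.map (f ⊗ₘ tPowMap fs)
    rw [← id_tensorHom, tensorHom_comp_tensorHom_assoc, Category.comp_id,
      aux_muPow_natural fs, ← Category.id_comp (F.map f), ← tensorHom_comp_tensorHom,
      id_tensorHom, Category.assoc, Category.assoc, μ_natural]

lemma aux_tFMap_id : ∀ {A B : List C} (fs : HomList A B),
    eqToHom (tF_id' A) ≫ tFMap (𝟭 C) fs = tPowMap fs ≫ eqToHom (tF_id' B)
  | _, _, .nil => by
    show eqToHom _ ≫ 𝟙 (𝟙_ C) = 𝟙 (𝟙_ C) ≫ eqToHom _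
    simp
    rfl
  | _, _, .cons (a := a) (b := b) f fs => by
    show eqToHom (tF_id' (a :: _)) ≫ ((𝟭 C).map f ⊗ₘ tFMap (𝟭 C) fs)
      = (f ⊗ₘ tPowMap fs) ≫ eqToHom (tF_id' (b :: _))
    erw [aux_eqToHom_tF_cons, aux_eqToHom_tF_cons, ← id_tensorHom, ← id_tensorHom,
      tensorHom_comp_tensorHom, tensorHom_comp_tensorHom, Category.id_comp, Category.comp_id,
      Functor.id_map, aux_tFMap_id fs]

/-- The `C`-side merge map (an inverse associator padding). -/
def cMerge : ∀ (A : List C) (i : ℕ), tPow A ⟶ tPow (mergeAt A i)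
  | a :: b :: l, 0 => (α_ a b (tPow l)).inv
  | a :: _ :: l, i + 1 => a ◁ cMerge (_ :: l) i
  | [], _ => 𝟙 _
  | [a], _ => 𝟙 _

lemma aux_mergeId : ∀ (A : List C) (i : ℕ),
    eqToHom (tF_id' A) ≫ mergeHom (𝟭 C) A i
      = cMerge A i ≫ eqToHom (tF_id' (mergeAt A i))
  | a :: b :: l, 0 => by
    show eqToHom (tF_id' (a :: b :: l))
        ≫ (α_ ((𝟭 C).obj a) ((𝟭 C).obj b) (tF (𝟭 C) l)).inv ≫ (μ (𝟭 C) a b ▷ tF (𝟭 C) l)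
      = (α_ a b (tPow l)).inv ≫ eqToHom (tF_id' ((a ⊗ b) :: l))
    erw [aux_eqToHom_tF_cons a (b :: l), aux_eqToHom_tF_cons b l,
      aux_eqToHom_tF_cons (a ⊗ b) l]
    rw [id_μ]
    show (a ◁ (b ◁ eqToHom (tF_id' l))) ≫ (α_ a b (tF (𝟭 C) l)).inv
        ≫ (𝟙 (a ⊗ b) ▷ tF (𝟭 C) l)
      = (α_ a b (tPow l)).inv ≫ ((a ⊗ b) ◁ eqToHom (tF_id' l))
    rw [id_whiskerRight, Category.comp_id, associator_inv_naturality_right]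
  | a :: b :: l, i + 1 => by
    show eqToHom (tF_id' (a :: b :: l)) ≫ ((𝟭 C).obj a ◁ mergeHom (𝟭 C) (b :: l) i)
      = (a ◁ cMerge (b :: l) i) ≫ eqToHom (tF_id' (a :: mergeAt (b :: l) i))
    erw [aux_eqToHom_tF_cons, aux_eqToHom_tF_cons a (mergeAt (b :: l) i)]
    show (a ◁ eqToHom (tF_id' (b :: l))) ≫ (a ◁ mergeHom (𝟭 C) (b :: l) i)
      = (a ◁ cMerge (b :: l) i) ≫ (a ◁ eqToHom (tF_id' (mergeAt (b :: l) i)))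
    rw [← MonoidalCategory.whiskerLeft_comp, ← MonoidalCategory.whiskerLeft_comp, aux_mergeId (b :: l) i]
  | [], _ => by
    show eqToHom _ ≫ 𝟙 _ = 𝟙 _ ≫ eqToHom _
    simp
  | [a], _ => by
    show eqToHom _ ≫ 𝟙 _ = 𝟙 _ ≫ eqToHom _
    simp

lemma aux_cMerge_mergePad : ∀ (A : List C) (i : ℕ),
    cMerge A i ≫ mergePad A i = 𝟙 (tPow A)
  | x :: y :: l, 0 => by
    show (α_ x y (tPow l)).inv ≫ (α_ x y (tPow l)).hom = 𝟙 (x ⊗ y ⊗ tPow l)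
    simp
  | a :: b :: l, i + 1 => by
    show (a ◁ cMerge (b :: l) i) ≫ (a ◁ mergePad (b :: l) i) = _
    rw [← MonoidalCategory.whiskerLeft_comp, aux_cMerge_mergePad (b :: l) i, MonoidalCategory.whiskerLeft_id]
    rfl
  | [], _ => Category.comp_id _
  | [a], _ => Category.comp_id _

lemma aux_mergeMu : ∀ (A : List C) (i : ℕ),
    mergeHom F A i ≫ muPow F (mergeAt A i) = muPow F A ≫ F.map (cMerge A i)
  | a :: b :: l, 0 => by
    show ((α_ (F.obj a) (F.obj b) (tF F l)).inv ≫ (μ F a b ▷ tF F l))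
        ≫ (F.obj (a ⊗ b) ◁ muPow F l) ≫ μ F (a ⊗ b) (tPow l)
      = ((F.obj a ◁ ((F.obj b ◁ muPow F l) ≫ μ F b (tPow l))) ≫ μ F a (tPow (b :: l)))
        ≫ F.map (α_ a b (tPow l)).inv
    rw [Category.assoc, ← whisker_exchange_assoc]
    show (α_ (F.obj a) (F.obj b) (tF F l)).inv ≫ ((F.obj a ⊗ F.obj b) ◁ muPow F l)
        ≫ (μ F a b ▷ F.obj (tPow l)) ≫ μ F (a ⊗ b) (tPow l)
      = ((F.obj a ◁ ((F.obj b ◁ muPow F l) ≫ μ F b (tPow l))) ≫ μ F a (b ⊗ tPow l))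
        ≫ F.map (α_ a b (tPow l)).inv
    rw [MonoidalCategory.whiskerLeft_comp, Category.assoc, Category.assoc,
      associativity_inv, ← associator_inv_naturality_right_assoc]
  | a :: b :: l, i + 1 => by
    show (F.obj a ◁ mergeHom F (b :: l) i)
        ≫ (F.obj a ◁ muPow F (mergeAt (b :: l) i)) ≫ μ F a (tPow (mergeAt (b :: l) i))
      = ((F.obj a ◁ muPow F (b :: l)) ≫ μ F a (tPow (b :: l)))
        ≫ F.map (a ◁ cMerge (b :: l) i)
    rw [← MonoidalCategory.whiskerLeft_comp_assoc, aux_mergeMu (b :: l) i, MonoidalCategory.whiskerLeft_comp,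
      Category.assoc, μ_natural_right, Category.assoc]
  | [], _ => by
    show 𝟙 _ ≫ muPow F [] = muPow F [] ≫ F.map (𝟙 _)
    simp
  | [a], _ => by
    show 𝟙 _ ≫ muPow F [a] = muPow F [a] ≫ F.map (𝟙 _)
    simp

lemma aux_splitMu : ∀ (A : List C) (a : C),
    (splitF F A a).hom ≫ (muPow F A ▷ F.obj a) ≫ μ F (tPow A) a
      = muPow F (A ++ [a]) ≫ F.map (splitC A a).hom
  | [], a => by
    show ((ρ_ (F.obj a)).hom ≫ (λ_ (F.obj a)).inv) ≫ (ε F ▷ F.obj a) ≫ μ F (𝟙_ C) a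
      = ((F.obj a ◁ ε F) ≫ μ F a (𝟙_ C)) ≫ F.map ((ρ_ a).hom ≫ (λ_ a).inv)
    rw [Category.assoc, left_unitality_inv, F.map_comp]
    simp
  | b :: A, a => by
    show ((F.obj b ◁ (splitF F A a).hom) ≫ (α_ (F.obj b) (tF F A) (F.obj a)).inv)
        ≫ (((F.obj b ◁ muPow F A) ≫ μ F b (tPow A)) ▷ F.obj a)
        ≫ μ F (b ⊗ tPow A) a
      = ((F.obj b ◁ muPow F (A ++ [a])) ≫ μ F b (tPow (A ++ [a])))
        ≫ F.map ((b ◁ (splitC A a).hom) ≫ (α_ b (tPow A) a).inv)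
    simp only [Category.assoc, F.map_comp]
    rw [← μ_natural_right_assoc, ← MonoidalCategory.whiskerLeft_comp_assoc,
      ← aux_splitMu A a]
    simp only [comp_whiskerRight, MonoidalCategory.whiskerLeft_comp, Category.assoc,
      associativity_inv, associator_inv_naturality_middle_assoc]

lemma aux_splitF_id : ∀ (A : List C) (a : C),
    eqToHom (tF_id' (A ++ [a])) ≫ (splitF (𝟭 C) A a).hom
      = (splitC A a).hom ≫ (eqToHom (tF_id' A) ▷ a)
  | [], a => by
    show eqToHom (tF_id' [a]) ≫ ((ρ_ ((𝟭 C).obj a)).hom ≫ (λ_ ((𝟭 C).obj a)).inv)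
      = ((ρ_ a).hom ≫ (λ_ a).inv) ≫ (eqToHom (tF_id' ([] : List C)) ▷ a)
    erw [aux_eqToHom_self (tF_id' [a]), aux_eqToHom_self (tF_id' ([] : List C))]
    show 𝟙 (a ⊗ 𝟙_ C) ≫ ((ρ_ a).hom ≫ (λ_ a).inv)
      = ((ρ_ a).hom ≫ (λ_ a).inv) ≫ (𝟙 (𝟙_ C) ▷ a)
    simp
  | b :: A, a => by
    show eqToHom (tF_id' (b :: (A ++ [a])))
        ≫ (((𝟭 C).obj b ◁ (splitF (𝟭 C) A a).hom)
          ≫ (α_ ((𝟭 C).obj b) (tF (𝟭 C) A) ((𝟭 C).obj a)).inv)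
      = ((b ◁ (splitC A a).hom) ≫ (α_ b (tPow A) a).inv)
        ≫ (eqToHom (tF_id' (b :: A)) ▷ a)
    rw [aux_eqToHom_tF_cons b (A ++ [a]), aux_eqToHom_tF_cons b A]
    show (b ◁ eqToHom (tF_id' (A ++ [a])))
        ≫ ((b ◁ (splitF (𝟭 C) A a).hom) ≫ (α_ b (tF (𝟭 C) A) a).inv)
      = ((b ◁ (splitC A a).hom) ≫ (α_ b (tPow A) a).inv)
        ≫ ((b ◁ eqToHom (tF_id' A)) ▷ a)
    rw [← Category.assoc, ← MonoidalCategory.whiskerLeft_comp, aux_splitF_id A a, MonoidalCategory.whiskerLeft_comp,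
      Category.assoc, associator_inv_naturality_middle, Category.assoc]

/-! ### The three face comparisons -/

lemma aux_firstFace (φ : Fam (𝟭 C)) (a : C) (l : List C) :
    firstFace F (resPost F φ) a l
      = muPow F (a :: l) ≫ F.map (eqToHom (tF_id' (a :: l)) ≫ firstFace (𝟭 C) φ a l) := by
  show (F.obj a ◁ (muPow F l ≫ F.map (eqToHom (tF_id' l) ≫ φ l))) ≫ μ F a (tPow l)
    = ((F.obj a ◁ muPow F l) ≫ μ F a (tPow l))
      ≫ F.map (eqToHom (tF_id' (a :: l)) ≫ ((𝟭 C).obj a ◁ φ l) ≫ μ (𝟭 C) a (tPow l))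
  erw [id_μ, Category.comp_id, aux_eqToHom_tF_cons]
  show (F.obj a ◁ (muPow F l ≫ F.map (eqToHom (tF_id' l) ≫ φ l))) ≫ μ F a (tPow l)
    = ((F.obj a ◁ muPow F l) ≫ μ F a (tPow l))
      ≫ F.map ((a ◁ eqToHom (tF_id' l)) ≫ (a ◁ φ l))
  simp only [Category.assoc]
  rw [← MonoidalCategory.whiskerLeft_comp, ← μ_natural_right]
  simp only [MonoidalCategory.whiskerLeft_comp, Category.assoc, F.map_comp]
  rfl

lemma aux_innerFace (φ : Fam (𝟭 C)) (A : List C) (i : ℕ) :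
    innerFace F (resPost F φ) A i
      = muPow F A ≫ F.map (eqToHom (tF_id' A) ≫ innerFace (𝟭 C) φ A i) := by
  show mergeHom F A i ≫ (muPow F (mergeAt A i)
        ≫ F.map (eqToHom (tF_id' (mergeAt A i)) ≫ φ (mergeAt A i)))
      ≫ F.map (mergePad A i)
    = muPow F A ≫ F.map (eqToHom (tF_id' A) ≫ mergeHom (𝟭 C) A i ≫ φ (mergeAt A i)
        ≫ (𝟭 C).map (mergePad A i))
  have h1 : eqToHom (tF_id' A) ≫ mergeHom (𝟭 C) A i ≫ φ (mergeAt A i)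
        ≫ (𝟭 C).map (mergePad A i)
      = cMerge A i ≫ (eqToHom (tF_id' (mergeAt A i)) ≫ φ (mergeAt A i))
        ≫ mergePad A i := by
    rw [← Category.assoc, aux_mergeId, Functor.id_map]
    simp only [Category.assoc]
  rw [h1, ← Category.assoc, ← Category.assoc, aux_mergeMu]
  simp only [F.map_comp, Category.assoc]

lemma aux_lastFace_gen (φ : Fam (𝟭 C)) {A : List C} (B : List C) (b : C)
    (he : B ++ [b] = A) :
    (eqToHom (congrArg (tF F) he.symm) ≫ (splitF F B b).hom ≫ (resPost F φ B ▷ F.obj b)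
        ≫ μ F (tPow B) b ≫ F.map (splitC B b).inv ≫ F.map (eqToHom (congrArg tPow he))
      : tF F A ⟶ F.obj (tPow A))
    = muPow F A ≫ F.map (eqToHom (tF_id' A)
        ≫ eqToHom (congrArg (tF (𝟭 C)) he.symm) ≫ (splitF (𝟭 C) B b).hom
        ≫ (φ B ▷ (𝟭 C).obj b) ≫ μ (𝟭 C) (tPow B) b
        ≫ (𝟭 C).map (splitC B b).inv ≫ (𝟭 C).map (eqToHom (congrArg tPow he))) := by
  subst he
  simp only [eqToHom_refl, Category.id_comp, Category.comp_id, F.map_id, Functor.id_map,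
    id_μ, Functor.id_obj]
  show (splitF F B b).hom
      ≫ ((muPow F B ≫ F.map (eqToHom (tF_id' B) ≫ φ B)) ▷ F.obj b)
      ≫ μ F (tPow B) b ≫ F.map (splitC B b).inv
    = muPow F (B ++ [b]) ≫ F.map (eqToHom (tF_id' (B ++ [b]))
        ≫ (splitF (𝟭 C) B b).hom ≫ (φ B ▷ b) ≫ (splitC B b).inv)
  have h1 : eqToHom (tF_id' (B ++ [b])) ≫ (splitF (𝟭 C) B b).hom ≫ (φ B ▷ b)
        ≫ (splitC B b).inv
      = (splitC B b).hom ≫ (((eqToHom (tF_id' B) ≫ φ B) ▷ b) ≫ (splitC B b).inv) := by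
    rw [← Category.assoc, aux_splitF_id]
    simp only [comp_whiskerRight, Category.assoc]
  rw [h1]
  conv_rhs => rw [F.map_comp, ← Category.assoc, ← aux_splitMu]
  have hμ : F.map (φ B) ▷ F.obj b ≫ μ F (tPow B) b ≫ F.map (splitC B b).inv
      = μ F (tF (𝟭 C) B) b ≫ F.map (φ B ▷ b) ≫ F.map (splitC B b).inv :=
    μ_natural_left_assoc F (φ B) b _
  simp only [comp_whiskerRight, Category.assoc, hμ, μ_natural_left_assoc, F.map_comp]

lemma aux_lastFace (φ : Fam (𝟭 C)) (A : List C) (h : A ≠ []) :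
    lastFace F (resPost F φ) A h
      = muPow F A ≫ F.map (eqToHom (tF_id' A) ≫ lastFace (𝟭 C) φ A h) :=
  aux_lastFace_gen F φ A.dropLast (A.getLast h) (List.dropLast_append_getLast h)

variable [Preadditive C] [Preadditive D] [F.Additive]

theorem resPost_is_cochain_map (φ : Fam (𝟭 C)) (hφ : Natural (𝟭 C) φ) :
    Natural F (resPost F φ) ∧ d F (resPost F φ) = resPost F (d (𝟭 C) φ) := by
  constructor
  · intro A B fs
    show tFMap F fs ≫ muPow F B ≫ F.map (eqToHom (tF_id' B) ≫ φ B)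
      = (muPow F A ≫ F.map (eqToHom (tF_id' A) ≫ φ A)) ≫ F.map (tPowMap fs)
    rw [← Category.assoc, aux_muPow_natural, Category.assoc, ← F.map_comp,
      ← Category.assoc, ← aux_tFMap_id, Category.assoc, hφ fs, Functor.id_map]
    simp only [F.map_comp, Category.assoc]
  · funext A
    match A with
    | [] =>
      show (0 : tF F [] ⟶ F.obj (tPow []))
        = muPow F [] ≫ F.map (eqToHom (tF_id' []) ≫ (0 : _ ⟶ (𝟭 C).obj (tPow [])))
      simp
    | a :: l =>
      show firstFace F (resPost F φ) a l
          + (∑ i ∈ Finset.range l.length,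
              ((-1 : ℤ) ^ (i + 1)) • innerFace F (resPost F φ) (a :: l) i)
          + ((-1 : ℤ) ^ (l.length + 1)) • lastFace F (resPost F φ) (a :: l) (by simp)
        = muPow F (a :: l) ≫ F.map (eqToHom (tF_id' (a :: l))
            ≫ (firstFace (𝟭 C) φ a l
              + (∑ i ∈ Finset.range l.length,
                  ((-1 : ℤ) ^ (i + 1)) • innerFace (𝟭 C) φ (a :: l) i)
              + ((-1 : ℤ) ^ (l.length + 1)) • lastFace (𝟭 C) φ (a :: l) (by simp)))
      rw [aux_firstFace, aux_lastFace]
      simp only [aux_innerFace]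
      simp only [Preadditive.comp_add, Preadditive.comp_sum, Preadditive.comp_zsmul,
        Functor.map_add, Functor.map_sum, Functor.map_zsmul]



end DeformationComplex
end

section
/- Let C be an R-linear semigroupal category. Two first-order deformations α + α⁽¹⁾ε and α + a⁽¹⁾ε of the associator of C (over R[ε]/(ε²)) are equivalent via a semigroupal functor with underlying functor the identity and structure map of the form 1_{A⊗B} + φ_{A,B}ε if and only if α⁽¹⁾ − a⁽¹⁾ = δ(φ); consequently first-order deformations of C are classified up to equivalence by H³(C) = H³(X^•(C), δ). -/
/-!
STATEMENT 11: Let `C` be an `R`-linear semigroupal (here: monoidal) category.  Two first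
order deformations `α + αd ε` and `α + ad ε` of the associator (over `R[ε]/(ε²)`) are
equivalent via a semigroupal functor whose underlying functor is the identity and whose
structure map is `1 + φ ε` if and only if `αd - ad = δ(φ)`.  (Consequently first order
deformations are classified up to equivalence by `H³(C)`.)

Morphisms of `C ⊗ R[ε]/(ε²)` are encoded as pairs `(f₀, f₁) = f₀ + f₁ ε`, with composition
`(f₀, f₁) ≫ (g₀, g₁) = (f₀ ≫ g₀, f₀ ≫ g₁ + f₁ ≫ g₀)` and tensor
`(f₀, f₁) ⊗ (g₀, g₁) = (f₀ ⊗ g₀, f₀ ⊗ g₁ + f₁ ⊗ g₀)`.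
-/

open CategoryTheory MonoidalCategory

universe v u

variable {C : Type u} [Category.{v} C] [MonoidalCategory C] [Preadditive C]
  [MonoidalPreadditive C]

/-- Composition in `C ⊗ R[ε]/(ε²)` in terms of pairs of morphisms of `C`. -/
def compEps {X Y Z : C} (f : (X ⟶ Y) × (X ⟶ Y)) (g : (Y ⟶ Z) × (Y ⟶ Z)) :
    (X ⟶ Z) × (X ⟶ Z) :=
  (f.1 ≫ g.1, f.1 ≫ g.2 + f.2 ≫ g.1)

/-- Tensor product of morphisms in `C ⊗ R[ε]/(ε²)`. -/
def tensEps {X Y X' Y' : C} (f : (X ⟶ Y) × (X ⟶ Y)) (g : (X' ⟶ Y') × (X' ⟶ Y')) :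
    (X ⊗ X' ⟶ Y ⊗ Y') × (X ⊗ X' ⟶ Y ⊗ Y') :=
  (f.1 ⊗ₘ g.1, f.1 ⊗ₘ g.2 + f.2 ⊗ₘ g.1)

/-- Identity morphism of `C ⊗ R[ε]/(ε²)`. -/
def idEps (X : C) : (X ⟶ X) × (X ⟶ X) := (𝟙 X, 0)

/-- The deformation coboundary of a `2`-cochain `φ`, padded by associators so as to be a
morphism `(A ⊗ B) ⊗ C' ⟶ A ⊗ (B ⊗ C')`. -/
def delta2 (φ : ∀ A B : C, A ⊗ B ⟶ A ⊗ B) (A B C' : C) :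
    (A ⊗ B) ⊗ C' ⟶ A ⊗ (B ⊗ C') :=
  (α_ A B C').hom ≫ (A ◁ φ B C')
    - φ (A ⊗ B) C' ≫ (α_ A B C').hom
    + (α_ A B C').hom ≫ φ A (B ⊗ C')
    - (φ A B ▷ C') ≫ (α_ A B C').hom

theorem firstOrder_deformations_equivalent_iff_coboundary
    (R : Type*) [CommRing R] [Linear R C] [MonoidalLinear R C]
    (αd ad : ∀ A B C' : C, ((A ⊗ B) ⊗ C' ⟶ A ⊗ (B ⊗ C')))
    (φ : ∀ A B : C, A ⊗ B ⟶ A ⊗ B)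
    (hφ : ∀ {A A' B B' : C} (f : A ⟶ A') (g : B ⟶ B'),
      (f ⊗ₘ g) ≫ φ A' B' = φ A B ≫ (f ⊗ₘ g)) :
    -- the coherence hexagon for the identity functor with structure map `1 + φ ε`,
    -- as a semigroupal functor from `(C, α + ad ε)` to `(C, α + αd ε)` ...
    (∀ A B C' : C,
        compEps (tensEps (𝟙 (A ⊗ B), φ A B) (idEps C'))
          (compEps (𝟙 ((A ⊗ B) ⊗ C'), φ (A ⊗ B) C') ((α_ A B C').hom, αd A B C'))
      = compEps ((α_ A B C').hom, ad A B C')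
          (compEps (tensEps (idEps A) (𝟙 (B ⊗ C'), φ B C'))
            (𝟙 (A ⊗ (B ⊗ C')), φ A (B ⊗ C')))) ↔
    -- ... holds iff `αd - ad` is the coboundary of `φ`.
    (∀ A B C' : C, αd A B C' - ad A B C' = delta2 φ A B C') := by
  constructor
  · intro h A B C'
    have h2 := congrArg Prod.snd (h A B C')
    simp [compEps, tensEps, idEps, tensorHom_id, id_tensorHom] at h2
    simp only [delta2, sub_eq_iff_eq_add]
    linear_combination (norm := abel) h2
  · intro h A B C'
    have h2 := h A B C'
    simp [delta2] at h2
    ext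
    · simp [compEps, tensEps, idEps]
    · simp [compEps, tensEps, idEps, tensorHom_id, id_tensorHom]
      linear_combination (norm := abel) h2
end

section
/- Let C be a monoidal category over R and α̃ = Σᵢ α⁽ⁱ⁾εⁱ a formal deformation of the associator making (C⊗R[[ε]], ⊗, α̃) semigroupal. Given any family of maps ν⁽ⁱ⁾ : I → I with ν⁽⁰⁾ = λ_I = ρ_I, the transformations λ̃_A = Σₙ (Σ_{i+j=n} ⌈α⁽ⁱ⁾_{A,I,I}∘(A⊗ν⁽ʲ⁾)⌉)εⁿ and ρ̃_B = Σₙ (Σ_{i+j=n} ⌈β⁽ⁱ⁾_{I,I,B}∘(ν⁽ʲ⁾⊗B)⌉)εⁿ, where α̃⁻¹ = Σᵢ β⁽ⁱ⁾εⁱ, are unit transformations making the semigroupal deformation a deformation of C as a monoidal category. -/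
/-!
STATEMENT 12: Let `C` be a monoidal category over `R` and `α̃ = Σ αᵢ εⁱ` a formal deformation
of the associator making `(C ⊗ R[[ε]], ⊗, α̃)` semigroupal (the pentagon holds degreewise),
with inverse `β̃ = Σ βᵢ εⁱ`.  Given any family `ν⁽ⁱ⁾ : I ⟶ I` with `ν⁽⁰⁾` the identity
(the reduced form of `λ_I = ρ_I`), the unit transformations
`ρ̃_A = Σₙ (Σ_{i+j=n} ⌈α⁽ⁱ⁾_{A,I,I} ∘ (A ⊗ ν⁽ʲ⁾)⌉) εⁿ` and
`λ̃_B = Σₙ (Σ_{i+j=n} ⌈β⁽ⁱ⁾_{I,I,B} ∘ (ν⁽ʲ⁾ ⊗ B)⌉) εⁿ`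
make the semigroupal deformation into a deformation of `C` as a monoidal category:
the triangle identity holds degreewise, together with the bigon `ρ̃_I = λ̃_I`.

Formal power series of morphisms are encoded as functions `ℕ → (X ⟶ Y)`, composition and
tensor being given by Cauchy products.
-/

open CategoryTheory MonoidalCategory

universe v u

variable {C : Type u} [Category.{v} C] [MonoidalCategory C] [Preadditive C]
  [MonoidalPreadditive C]

/-- The degree-`n` coefficient of the deformed right unitor
`ρ̃_A = Σₙ (Σ_{i+j=n} ⌈α⁽ⁱ⁾_{A,I,I} ∘ (A ⊗ ν⁽ʲ⁾)⌉) εⁿ`, padded by structure maps of `C`. -/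
def deformedRho (αf : ℕ → ∀ A B C' : C, (A ⊗ B) ⊗ C' ⟶ A ⊗ (B ⊗ C'))
    (ν : ℕ → (𝟙_ C ⟶ 𝟙_ C)) (n : ℕ) (A : C) : A ⊗ 𝟙_ C ⟶ A :=
  ∑ p ∈ Finset.HasAntidiagonal.antidiagonal n,
    ((ρ_ A).inv ▷ 𝟙_ C) ≫ αf p.1 A (𝟙_ C) (𝟙_ C) ≫ (A ◁ (λ_ (𝟙_ C)).hom) ≫
      (A ◁ ν p.2) ≫ (ρ_ A).hom

/-- The degree-`n` coefficient of the deformed left unitor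
`λ̃_B = Σₙ (Σ_{i+j=n} ⌈β⁽ⁱ⁾_{I,I,B} ∘ (ν⁽ʲ⁾ ⊗ B)⌉) εⁿ`, padded by structure maps of `C`. -/
def deformedLambda (βf : ℕ → ∀ A B C' : C, A ⊗ (B ⊗ C') ⟶ (A ⊗ B) ⊗ C')
    (ν : ℕ → (𝟙_ C ⟶ 𝟙_ C)) (n : ℕ) (B : C) : 𝟙_ C ⊗ B ⟶ B :=
  ∑ p ∈ Finset.HasAntidiagonal.antidiagonal n,
    (𝟙_ C ◁ (λ_ B).inv) ≫ βf p.1 (𝟙_ C) (𝟙_ C) B ≫ ((λ_ (𝟙_ C)).hom ▷ B) ≫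
      (ν p.2 ▷ B) ≫ (λ_ B).hom

open Finset

set_option linter.unusedSectionVars false

private lemma ad_assoc {M : Type*} [AddCommMonoid M] (n : ℕ) (F : ℕ → ℕ → ℕ → M) :
    ∑ p ∈ antidiagonal n, ∑ q ∈ antidiagonal p.1, F q.1 q.2 p.2
      = ∑ p ∈ antidiagonal n, ∑ q ∈ antidiagonal p.2, F p.1 q.1 q.2 := by
  rw [Finset.sum_sigma', Finset.sum_sigma']
  refine Finset.sum_nbij' (i := fun x => ⟨(x.2.1, x.2.2 + x.1.2), (x.2.2, x.1.2)⟩)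
    (j := fun x => ⟨(x.1.1 + x.2.1, x.2.2), (x.1.1, x.2.1)⟩) ?_ ?_ ?_ ?_ ?_
  · rintro ⟨⟨s, c⟩, ⟨a, b⟩⟩ hx
    simp only [Finset.mem_sigma, Finset.HasAntidiagonal.mem_antidiagonal, and_true, true_and] at hx ⊢; omega
  · rintro ⟨⟨a, t⟩, ⟨b, c⟩⟩ hx
    simp only [Finset.mem_sigma, Finset.HasAntidiagonal.mem_antidiagonal, and_true, true_and] at hx ⊢; omega
  · rintro ⟨⟨s, c⟩, ⟨a, b⟩⟩ hx
    simp only [Finset.mem_sigma, Finset.HasAntidiagonal.mem_antidiagonal] at hx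
    simp only [Sigma.mk.inj_iff, Prod.mk.injEq, heq_eq_eq, and_true, true_and]; omega
  · rintro ⟨⟨a, t⟩, ⟨b, c⟩⟩ hx
    simp only [Finset.mem_sigma, Finset.HasAntidiagonal.mem_antidiagonal] at hx
    simp only [Sigma.mk.inj_iff, Prod.mk.injEq, heq_eq_eq, and_true, true_and]; omega
  · rintro ⟨⟨s, c⟩, ⟨a, b⟩⟩ _; rfl

namespace Stmt12

variable {X Y Z W : C}

/-- Cauchy composition of formal series of morphisms. -/
def sc (f : ℕ → (X ⟶ Y)) (g : ℕ → (Y ⟶ Z)) : ℕ → (X ⟶ Z) :=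
  fun n => ∑ p ∈ antidiagonal n, f p.1 ≫ g p.2

/-- Constant series. -/
def ko (f : X ⟶ Y) : ℕ → (X ⟶ Y) := fun n => if n = 0 then f else 0

def wl (X : C) {Y Z : C} (f : ℕ → (Y ⟶ Z)) : ℕ → (X ⊗ Y ⟶ X ⊗ Z) := fun n => X ◁ f n

def wr {Y Z : C} (f : ℕ → (Y ⟶ Z)) (X : C) : ℕ → (Y ⊗ X ⟶ Z ⊗ X) := fun n => f n ▷ X

lemma sc_assoc (f : ℕ → (X ⟶ Y)) (g : ℕ → (Y ⟶ Z)) (h : ℕ → (Z ⟶ W)) :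
    sc (sc f g) h = sc f (sc g h) := by
  funext n
  simp only [sc, Preadditive.sum_comp, Preadditive.comp_sum, Category.assoc]
  exact ad_assoc n fun a b c => f a ≫ g b ≫ h c

lemma ko_sc (f : X ⟶ Y) (g : ℕ → (Y ⟶ Z)) : sc (ko f) g = fun n => f ≫ g n := by
  funext n
  rw [sc, Finset.sum_eq_single (0, n)]
  · simp [ko]
  · rintro ⟨a, b⟩ hb hne
    simp only [Finset.HasAntidiagonal.mem_antidiagonal] at hb
    have : a ≠ 0 := by
      rintro rfl; exact hne (by simp only [Prod.mk.injEq, true_and, and_true]; omega)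
    simp [ko, this]
  · intro h; exact absurd (by simp) h

lemma sc_ko (f : ℕ → (X ⟶ Y)) (g : Y ⟶ Z) : sc f (ko g) = fun n => f n ≫ g := by
  funext n
  rw [sc, Finset.sum_eq_single (n, 0)]
  · simp [ko]
  · rintro ⟨a, b⟩ hb hne
    simp only [Finset.HasAntidiagonal.mem_antidiagonal] at hb
    have : b ≠ 0 := by
      rintro rfl; exact hne (by simp only [Prod.mk.injEq, true_and, and_true]; omega)
    simp [ko, this]
  · intro h; exact absurd (by simp) h

lemma ko_ko (f : X ⟶ Y) (g : Y ⟶ Z) : sc (ko f) (ko g) = ko (f ≫ g) := by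
  rw [ko_sc]; funext n; by_cases h : n = 0 <;> simp [ko, h]

lemma id_sc (f : ℕ → (X ⟶ Y)) : sc (ko (𝟙 X)) f = f := by
  rw [ko_sc]; simp

lemma sc_id (f : ℕ → (X ⟶ Y)) : sc f (ko (𝟙 Y)) = f := by
  rw [sc_ko]; simp

lemma wl_sc (A : C) (f : ℕ → (X ⟶ Y)) (g : ℕ → (Y ⟶ Z)) :
    wl A (sc f g) = sc (wl A f) (wl A g) := by
  funext n
  simp [wl, sc, whiskerLeft_sum, MonoidalCategory.whiskerLeft_comp]

lemma wr_sc (f : ℕ → (X ⟶ Y)) (g : ℕ → (Y ⟶ Z)) (A : C) :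
    wr (sc f g) A = sc (wr f A) (wr g A) := by
  funext n
  simp [wr, sc, sum_whiskerRight, MonoidalCategory.comp_whiskerRight]

lemma wl_ko (A : C) (f : X ⟶ Y) : wl A (ko f) = ko (A ◁ f) := by
  funext n; by_cases h : n = 0 <;> simp [wl, ko, h]

lemma wr_ko (f : X ⟶ Y) (A : C) : wr (ko f) A = ko (f ▷ A) := by
  funext n; by_cases h : n = 0 <;> simp [wr, ko, h]

/-- Transfer of pointwise naturality to series level. -/
lemma sc_comm {X Y X' Y' : C} {φ : ℕ → (X ⟶ X')} {G : ℕ → (X' ⟶ Y')}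
    {F : ℕ → (X ⟶ Y)} {ψ : ℕ → (Y ⟶ Y')}
    (h : ∀ i j, φ i ≫ G j = F j ≫ ψ i) : sc φ G = sc F ψ := by
  funext n
  unfold sc
  conv_lhs => rw [← Finset.HasAntidiagonal.map_swap_antidiagonal, Finset.sum_map]
  simp only [Function.Embedding.coeFn_mk, Prod.fst_swap, Prod.snd_swap]
  exact Finset.sum_congr rfl fun p _ => h p.2 p.1

lemma sc_cancel_left {f : ℕ → (X ⟶ Y)} {g : ℕ → (Y ⟶ X)} (h : sc f g = ko (𝟙 X))
    (S : ℕ → (X ⟶ Z)) : sc f (sc g S) = S := by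
  rw [← sc_assoc, h, id_sc]

lemma sc_cancel_right {f : ℕ → (X ⟶ Y)} {g : ℕ → (Y ⟶ X)} (h : sc f g = ko (𝟙 X))
    (S : ℕ → (Z ⟶ X)) : sc (sc S f) g = S := by
  rw [sc_assoc, h, sc_id]

lemma conj_flip {X Y Z W : C} {φ : ℕ → (X ⟶ Y)} {αR : ℕ → (Y ⟶ W)} {βR : ℕ → (W ⟶ Y)}
    {αL : ℕ → (X ⟶ Z)} {βL : ℕ → (Z ⟶ X)} {ψ : ℕ → (Z ⟶ W)}
    (h1 : sc αR βR = ko (𝟙 Y)) (h2 : sc βL αL = ko (𝟙 Z))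
    (hx : sc φ αR = sc αL ψ) : sc βL φ = sc ψ βR := by
  calc sc βL φ = sc βL (sc φ (sc αR βR)) := by rw [h1, sc_id]
    _ = sc βL (sc (sc φ αR) βR) := by rw [sc_assoc]
    _ = sc βL (sc (sc αL ψ) βR) := by rw [hx]
    _ = sc (sc (sc βL αL) ψ) βR := by rw [← sc_assoc, ← sc_assoc]
    _ = sc ψ βR := by rw [h2, id_sc]

section Main

variable (αf : ℕ → ∀ A B C' : C, (A ⊗ B) ⊗ C' ⟶ A ⊗ (B ⊗ C'))
variable (βf : ℕ → ∀ A B C' : C, A ⊗ (B ⊗ C') ⟶ (A ⊗ B) ⊗ C')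
variable (ν : ℕ → (𝟙_ C ⟶ 𝟙_ C))

def aS (A B C' : C) : ℕ → ((A ⊗ B) ⊗ C' ⟶ A ⊗ (B ⊗ C')) := fun n => αf n A B C'
def bS (A B C' : C) : ℕ → (A ⊗ (B ⊗ C') ⟶ (A ⊗ B) ⊗ C') := fun n => βf n A B C'
def uS : ℕ → (𝟙_ C ⊗ 𝟙_ C ⟶ 𝟙_ C) := fun n => (λ_ (𝟙_ C)).hom ≫ ν n
def ΛS (B : C) : ℕ → (𝟙_ C ⊗ B ⟶ B) := fun n => deformedLambda βf ν n B
def PS (A : C) : ℕ → (A ⊗ 𝟙_ C ⟶ A) := fun n => deformedRho αf ν n A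

variable {αf βf}

lemma hαβS (h : ∀ (n : ℕ) (A B C' : C),
      (∑ p ∈ Finset.HasAntidiagonal.antidiagonal n, αf p.1 A B C' ≫ βf p.2 A B C')
        = if n = 0 then 𝟙 ((A ⊗ B) ⊗ C') else 0) (A B C' : C) :
    sc (aS αf A B C') (bS βf A B C') = ko (𝟙 ((A ⊗ B) ⊗ C')) := by
  funext n; exact h n A B C'

lemma hβαS (h : ∀ (n : ℕ) (A B C' : C),
      (∑ p ∈ Finset.HasAntidiagonal.antidiagonal n, βf p.1 A B C' ≫ αf p.2 A B C')
        = if n = 0 then 𝟙 (A ⊗ (B ⊗ C')) else 0) (A B C' : C) :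
    sc (bS βf A B C') (aS αf A B C') = ko (𝟙 (A ⊗ (B ⊗ C'))) := by
  funext n; exact h n A B C'

lemma hpentS (h : ∀ (n : ℕ) (A B C' D : C),
      (∑ p ∈ Finset.HasAntidiagonal.antidiagonal n, αf p.1 (A ⊗ B) C' D ≫ αf p.2 A B (C' ⊗ D))
        = ∑ p ∈ Finset.HasAntidiagonal.antidiagonal n, ∑ q ∈ Finset.HasAntidiagonal.antidiagonal p.2,
            (αf p.1 A B C' ▷ D) ≫ αf q.1 A (B ⊗ C') D ≫ (A ◁ αf q.2 B C' D))
    (A B C' D : C) :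
    sc (aS αf (A ⊗ B) C' D) (aS αf A B (C' ⊗ D))
      = sc (wr (aS αf A B C') D) (sc (aS αf A (B ⊗ C') D) (wl A (aS αf B C' D))) := by
  funext n
  simp only [sc, aS, wr, wl, Preadditive.comp_sum, Category.assoc]
  exact h n A B C' D

lemma L1 (B : C) : ΛS βf ν B
    = sc (ko (𝟙_ C ◁ (λ_ B).inv))
        (sc (sc (bS βf (𝟙_ C) (𝟙_ C) B) (wr (uS ν) B)) (ko (λ_ B).hom)) := by
  rw [sc_ko, ko_sc]
  funext n
  simp [ΛS, deformedLambda, sc, bS, wr, uS, Preadditive.comp_sum, Preadditive.sum_comp,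
    MonoidalCategory.comp_whiskerRight, Category.assoc]

lemma L2 (A : C) : PS αf ν A
    = sc (ko ((ρ_ A).inv ▷ 𝟙_ C))
        (sc (sc (aS αf A (𝟙_ C) (𝟙_ C)) (wl A (uS ν))) (ko (ρ_ A).hom)) := by
  rw [sc_ko, ko_sc]
  funext n
  simp [PS, deformedRho, sc, aS, wl, uS, Preadditive.comp_sum, Preadditive.sum_comp,
    MonoidalCategory.whiskerLeft_comp, Category.assoc]

lemma claimA (B : C) :
    sc (bS βf (𝟙_ C) (𝟙_ C) B) (wr (uS ν) B) = wl (𝟙_ C) (ΛS βf ν B) := by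
  have hL : sc (wl (𝟙_ C) (sc (bS βf (𝟙_ C) (𝟙_ C) B) (wr (uS ν) B)))
        (ko (λ_ (𝟙_ C ⊗ B)).hom)
      = sc (ko (λ_ (𝟙_ C ⊗ (𝟙_ C ⊗ B))).hom) (sc (bS βf (𝟙_ C) (𝟙_ C) B) (wr (uS ν) B)) := by
    refine sc_comm fun i j => ?_
    by_cases h : j = 0 <;> simp [ko, wl, h, MonoidalCategory.leftUnitor_naturality]
  have clam : 𝟙_ C ◁ (λ_ B).hom = (λ_ (𝟙_ C ⊗ B)).hom := by simp
  rw [L1, wl_sc, wl_sc, wl_ko, wl_ko, clam, hL, ← sc_assoc, ko_ko]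
  have : (𝟙_ C ◁ (𝟙_ C ◁ (λ_ B).inv)) ≫ (λ_ (𝟙_ C ⊗ (𝟙_ C ⊗ B))).hom
      = 𝟙 (𝟙_ C ⊗ (𝟙_ C ⊗ B)) := by simp
  rw [this, id_sc]

lemma claimB (A : C) :
    wr (PS αf ν A) (𝟙_ C) = sc (aS αf A (𝟙_ C) (𝟙_ C)) (wl A (uS ν)) := by
  have hR : sc (wr (sc (aS αf A (𝟙_ C) (𝟙_ C)) (wl A (uS ν))) (𝟙_ C))
        (ko (ρ_ (A ⊗ 𝟙_ C)).hom)
      = sc (ko (ρ_ ((A ⊗ 𝟙_ C) ⊗ 𝟙_ C)).hom) (sc (aS αf A (𝟙_ C) (𝟙_ C)) (wl A (uS ν))) := by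
    refine sc_comm fun i j => ?_
    by_cases h : j = 0 <;> simp [ko, wr, h, MonoidalCategory.rightUnitor_naturality]
  have crho : (ρ_ A).hom ▷ 𝟙_ C = (ρ_ (A ⊗ 𝟙_ C)).hom := by simp
  rw [L2, wr_sc, wr_sc, wr_ko, wr_ko, crho, hR, ← sc_assoc, ko_ko]
  have : (((ρ_ A).inv ▷ 𝟙_ C) ▷ 𝟙_ C) ≫ (ρ_ ((A ⊗ 𝟙_ C) ⊗ 𝟙_ C)).hom
      = 𝟙 ((A ⊗ 𝟙_ C) ⊗ 𝟙_ C) := by simp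
  rw [this, id_sc]

lemma triangleS
    (hnat : ∀ (i : ℕ) {A A' B B' X X' : C} (f : A ⟶ A') (g : B ⟶ B') (h : X ⟶ X'),
      ((f ⊗ₘ g) ⊗ₘ h) ≫ αf i A' B' X' = αf i A B X ≫ (f ⊗ₘ (g ⊗ₘ h)))
    (hpent : ∀ (n : ℕ) (A B C' D : C),
      (∑ p ∈ Finset.HasAntidiagonal.antidiagonal n, αf p.1 (A ⊗ B) C' D ≫ αf p.2 A B (C' ⊗ D))
        = ∑ p ∈ Finset.HasAntidiagonal.antidiagonal n, ∑ q ∈ Finset.HasAntidiagonal.antidiagonal p.2,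
            (αf p.1 A B C' ▷ D) ≫ αf q.1 A (B ⊗ C') D ≫ (A ◁ αf q.2 B C' D))
    (hinv₁ : ∀ (n : ℕ) (A B C' : C),
      (∑ p ∈ Finset.HasAntidiagonal.antidiagonal n, αf p.1 A B C' ≫ βf p.2 A B C')
        = if n = 0 then 𝟙 ((A ⊗ B) ⊗ C') else 0)
    (hinv₂ : ∀ (n : ℕ) (A B C' : C),
      (∑ p ∈ Finset.HasAntidiagonal.antidiagonal n, βf p.1 A B C' ≫ αf p.2 A B C')
        = if n = 0 then 𝟙 (A ⊗ (B ⊗ C')) else 0)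
    (A B : C) :
    sc (aS αf A (𝟙_ C) B) (wl A (ΛS βf ν B)) = wr (PS αf ν A) B := by
  have hαβ := hαβS (αf := αf) (βf := βf) hinv₁
  have hβα := hβαS (αf := αf) (βf := βf) hinv₂
  have E3 : sc (ko (((ρ_ A).inv ▷ 𝟙_ C) ▷ B)) (aS αf (A ⊗ 𝟙_ C) (𝟙_ C) B)
      = sc (aS αf A (𝟙_ C) B) (ko ((ρ_ A).inv ▷ (𝟙_ C ⊗ B))) := by
    rw [ko_sc, sc_ko]; funext n
    have h := hnat n (ρ_ A).inv (𝟙 (𝟙_ C)) (𝟙 B)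
    simpa only [tensorHom_id, id_tensorHom, MonoidalCategory.id_tensorHom_id,
      MonoidalCategory.id_whiskerRight, MonoidalCategory.whiskerLeft_id, aS] using h
  have hx : sc (wr (wl A (uS ν)) B) (aS αf A (𝟙_ C) B)
      = sc (aS αf A (𝟙_ C ⊗ 𝟙_ C) B) (wl A (wr (uS ν) B)) := by
    refine sc_comm fun i j => ?_
    have h := hnat j (𝟙 A) (uS ν i) (𝟙 B)
    simpa only [tensorHom_id, id_tensorHom, aS, wl, wr] using h
  have E2 : sc (bS βf A (𝟙_ C ⊗ 𝟙_ C) B) (wr (wl A (uS ν)) B)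
      = sc (wl A (wr (uS ν) B)) (bS βf A (𝟙_ C) B) :=
    conj_flip (hαβ A (𝟙_ C) B) (hβα A (𝟙_ C ⊗ 𝟙_ C) B) hx
  have hy : sc (wl (A ⊗ 𝟙_ C) (ΛS βf ν B)) (aS αf A (𝟙_ C) B)
      = sc (aS αf A (𝟙_ C) (𝟙_ C ⊗ B)) (wl A (wl (𝟙_ C) (ΛS βf ν B))) := by
    refine sc_comm fun i j => ?_
    have h := hnat j (𝟙 A) (𝟙 (𝟙_ C)) (ΛS βf ν B i)
    simpa only [tensorHom_id, id_tensorHom, MonoidalCategory.id_tensorHom_id,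
      MonoidalCategory.id_whiskerRight, MonoidalCategory.whiskerLeft_id, aS, wl] using h
  have F4 : sc (bS βf A (𝟙_ C) (𝟙_ C ⊗ B)) (wl (A ⊗ 𝟙_ C) (ΛS βf ν B))
      = sc (wl A (wl (𝟙_ C) (ΛS βf ν B))) (bS βf A (𝟙_ C) B) :=
    conj_flip (hαβ A (𝟙_ C) B) (hβα A (𝟙_ C) (𝟙_ C ⊗ B)) hy
  have F6 : sc (wl (A ⊗ 𝟙_ C) (ΛS βf ν B)) (ko ((ρ_ A).hom ▷ B))
      = sc (ko ((ρ_ A).hom ▷ (𝟙_ C ⊗ B))) (wl A (ΛS βf ν B)) := by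
    refine sc_comm fun i j => ?_
    by_cases h : j = 0
    · subst h
      simpa only [wl, ko, reduceIte] using whisker_exchange (ρ_ A).hom (ΛS βf ν B i)
    · simp only [ko, if_neg h, Limits.comp_zero, Limits.zero_comp]
  have hcan : sc (wl A (aS αf (𝟙_ C) (𝟙_ C) B)) (wl A (bS βf (𝟙_ C) (𝟙_ C) B))
      = ko (𝟙 (A ⊗ ((𝟙_ C ⊗ 𝟙_ C) ⊗ B))) := by
    rw [← wl_sc, hαβ, wl_ko, MonoidalCategory.whiskerLeft_id]
  have E1 : wr (aS αf A (𝟙_ C) (𝟙_ C)) B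
      = sc (aS αf (A ⊗ 𝟙_ C) (𝟙_ C) B)
          (sc (aS αf A (𝟙_ C) (𝟙_ C ⊗ B))
            (sc (wl A (bS βf (𝟙_ C) (𝟙_ C) B)) (bS βf A (𝟙_ C ⊗ 𝟙_ C) B))) := by
    have hp := hpentS (αf := αf) hpent A (𝟙_ C) (𝟙_ C) B
    refine Eq.symm ?_
    calc sc (aS αf (A ⊗ 𝟙_ C) (𝟙_ C) B)
          (sc (aS αf A (𝟙_ C) (𝟙_ C ⊗ B))
            (sc (wl A (bS βf (𝟙_ C) (𝟙_ C) B)) (bS βf A (𝟙_ C ⊗ 𝟙_ C) B)))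
        = sc (sc (aS αf (A ⊗ 𝟙_ C) (𝟙_ C) B) (aS αf A (𝟙_ C) (𝟙_ C ⊗ B)))
            (sc (wl A (bS βf (𝟙_ C) (𝟙_ C) B)) (bS βf A (𝟙_ C ⊗ 𝟙_ C) B)) := by
          rw [sc_assoc]
      _ = sc (sc (wr (aS αf A (𝟙_ C) (𝟙_ C)) B)
            (sc (aS αf A (𝟙_ C ⊗ 𝟙_ C) B) (wl A (aS αf (𝟙_ C) (𝟙_ C) B))))
            (sc (wl A (bS βf (𝟙_ C) (𝟙_ C) B)) (bS βf A (𝟙_ C ⊗ 𝟙_ C) B)) := by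
          rw [hp]
      _ = sc (wr (aS αf A (𝟙_ C) (𝟙_ C)) B)
            (sc (aS αf A (𝟙_ C ⊗ 𝟙_ C) B)
              (sc (wl A (aS αf (𝟙_ C) (𝟙_ C) B))
                (sc (wl A (bS βf (𝟙_ C) (𝟙_ C) B)) (bS βf A (𝟙_ C ⊗ 𝟙_ C) B)))) := by
          rw [sc_assoc, sc_assoc]
      _ = sc (wr (aS αf A (𝟙_ C) (𝟙_ C)) B)
            (sc (aS αf A (𝟙_ C ⊗ 𝟙_ C) B) (bS βf A (𝟙_ C ⊗ 𝟙_ C) B)) := by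
          rw [← sc_assoc (wl A (aS αf (𝟙_ C) (𝟙_ C) B)), hcan, id_sc]
      _ = wr (aS αf A (𝟙_ C) (𝟙_ C)) B := by
          rw [hαβ, sc_id]
  refine Eq.symm ?_
  rw [L2, wr_sc, wr_sc, wr_sc, wr_ko, wr_ko]
  simp only [sc_assoc]
  rw [E1]
  simp only [sc_assoc]
  rw [← sc_assoc (bS βf A (𝟙_ C ⊗ 𝟙_ C) B) (wr (wl A (uS ν)) B), E2]
  simp only [sc_assoc]
  rw [← sc_assoc (wl A (bS βf (𝟙_ C) (𝟙_ C) B)) (wl A (wr (uS ν) B)), ← wl_sc,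
    claimA (ν := ν) B]
  rw [← sc_assoc (wl A (wl (𝟙_ C) (ΛS βf ν B))) (bS βf A (𝟙_ C) B), ← F4]
  simp only [sc_assoc]
  rw [F6]
  rw [sc_cancel_left (hαβ A (𝟙_ C) (𝟙_ C ⊗ B))]
  rw [← sc_assoc (ko (((ρ_ A).inv ▷ 𝟙_ C) ▷ B)) (aS αf (A ⊗ 𝟙_ C) (𝟙_ C) B), E3]
  simp only [sc_assoc]
  rw [← sc_assoc (ko ((ρ_ A).inv ▷ (𝟙_ C ⊗ B))) (ko ((ρ_ A).hom ▷ (𝟙_ C ⊗ B))), ko_ko,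
    show ((ρ_ A).inv ▷ (𝟙_ C ⊗ B)) ≫ ((ρ_ A).hom ▷ (𝟙_ C ⊗ B)) = 𝟙 _ by
      rw [← MonoidalCategory.comp_whiskerRight, Iso.inv_hom_id, MonoidalCategory.id_whiskerRight],
    id_sc]

lemma bigonS
    (hnat : ∀ (i : ℕ) {A A' B B' X X' : C} (f : A ⟶ A') (g : B ⟶ B') (h : X ⟶ X'),
      ((f ⊗ₘ g) ⊗ₘ h) ≫ αf i A' B' X' = αf i A B X ≫ (f ⊗ₘ (g ⊗ₘ h)))
    (hpent : ∀ (n : ℕ) (A B C' D : C),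
      (∑ p ∈ Finset.HasAntidiagonal.antidiagonal n, αf p.1 (A ⊗ B) C' D ≫ αf p.2 A B (C' ⊗ D))
        = ∑ p ∈ Finset.HasAntidiagonal.antidiagonal n, ∑ q ∈ Finset.HasAntidiagonal.antidiagonal p.2,
            (αf p.1 A B C' ▷ D) ≫ αf q.1 A (B ⊗ C') D ≫ (A ◁ αf q.2 B C' D))
    (hinv₁ : ∀ (n : ℕ) (A B C' : C),
      (∑ p ∈ Finset.HasAntidiagonal.antidiagonal n, αf p.1 A B C' ≫ βf p.2 A B C')
        = if n = 0 then 𝟙 ((A ⊗ B) ⊗ C') else 0)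
    (hinv₂ : ∀ (n : ℕ) (A B C' : C),
      (∑ p ∈ Finset.HasAntidiagonal.antidiagonal n, βf p.1 A B C' ≫ αf p.2 A B C')
        = if n = 0 then 𝟙 (A ⊗ (B ⊗ C')) else 0) :
    PS αf ν (𝟙_ C) = ΛS βf ν (𝟙_ C) := by
  have hαβ := hαβS (αf := αf) (βf := βf) hinv₁
  have hβα := hβαS (αf := αf) (βf := βf) hinv₂
  have tri := triangleS (ν := ν) hnat hpent hinv₁ hinv₂ (𝟙_ C) (𝟙_ C)
  have cA := claimA (βf := βf) ν (𝟙_ C)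
  have cB := claimB (αf := αf) ν (𝟙_ C)
  have e7 : wr (uS ν) (𝟙_ C)
      = sc (aS αf (𝟙_ C) (𝟙_ C) (𝟙_ C)) (wl (𝟙_ C) (uS ν)) := by
    calc wr (uS ν) (𝟙_ C)
        = sc (aS αf (𝟙_ C) (𝟙_ C) (𝟙_ C))
            (sc (bS βf (𝟙_ C) (𝟙_ C) (𝟙_ C)) (wr (uS ν) (𝟙_ C))) :=
          (sc_cancel_left (hαβ (𝟙_ C) (𝟙_ C) (𝟙_ C)) _).symm
      _ = sc (aS αf (𝟙_ C) (𝟙_ C) (𝟙_ C)) (wl (𝟙_ C) (ΛS βf ν (𝟙_ C))) := by rw [cA]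
      _ = wr (PS αf ν (𝟙_ C)) (𝟙_ C) := tri
      _ = sc (aS αf (𝟙_ C) (𝟙_ C) (𝟙_ C)) (wl (𝟙_ C) (uS ν)) := cB
  have hLam : ΛS βf ν (𝟙_ C) = uS ν := by
    have hw : wl (𝟙_ C) (ΛS βf ν (𝟙_ C)) = wl (𝟙_ C) (uS ν) := by
      rw [← cA, e7]
      exact sc_cancel_left (hβα (𝟙_ C) (𝟙_ C) (𝟙_ C)) _
    funext n
    have h := congrFun hw n
    simp only [wl, MonoidalCategory.id_whiskerLeft] at h
    rwa [Iso.cancel_iso_hom_left, cancel_mono] at h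
  have hP : PS αf ν (𝟙_ C) = uS ν := by
    have hw : wr (PS αf ν (𝟙_ C)) (𝟙_ C) = wr (uS ν) (𝟙_ C) := by
      rw [cB, ← e7]
    funext n
    have h := congrFun hw n
    simp only [wr, MonoidalCategory.whiskerRight_id] at h
    rwa [Iso.cancel_iso_hom_left, cancel_mono] at h
  rw [hLam, hP]

end Main

end Stmt12

theorem semigroupal_deformation_extends_to_monoidal
    (R : Type*) [CommRing R] [Linear R C] [MonoidalLinear R C]
    (αf : ℕ → ∀ A B C' : C, (A ⊗ B) ⊗ C' ⟶ A ⊗ (B ⊗ C'))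
    (βf : ℕ → ∀ A B C' : C, A ⊗ (B ⊗ C') ⟶ (A ⊗ B) ⊗ C')
    (hα₀ : ∀ A B C' : C, αf 0 A B C' = (α_ A B C').hom)
    (hnat : ∀ (i : ℕ) {A A' B B' X X' : C} (f : A ⟶ A') (g : B ⟶ B') (h : X ⟶ X'),
      ((f ⊗ₘ g) ⊗ₘ h) ≫ αf i A' B' X' = αf i A B X ≫ (f ⊗ₘ (g ⊗ₘ h)))
    -- the pentagon holds degreewise for `α̃`
    (hpent : ∀ (n : ℕ) (A B C' D : C),
      (∑ p ∈ Finset.HasAntidiagonal.antidiagonal n, αf p.1 (A ⊗ B) C' D ≫ αf p.2 A B (C' ⊗ D))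
        = ∑ p ∈ Finset.HasAntidiagonal.antidiagonal n, ∑ q ∈ Finset.HasAntidiagonal.antidiagonal p.2,
            (αf p.1 A B C' ▷ D) ≫ αf q.1 A (B ⊗ C') D ≫ (A ◁ αf q.2 B C' D))
    -- `β̃` is a two-sided inverse of `α̃` (as formal power series)
    (hinv₁ : ∀ (n : ℕ) (A B C' : C),
      (∑ p ∈ Finset.HasAntidiagonal.antidiagonal n, αf p.1 A B C' ≫ βf p.2 A B C')
        = if n = 0 then 𝟙 ((A ⊗ B) ⊗ C') else 0)
    (hinv₂ : ∀ (n : ℕ) (A B C' : C),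
      (∑ p ∈ Finset.HasAntidiagonal.antidiagonal n, βf p.1 A B C' ≫ αf p.2 A B C')
        = if n = 0 then 𝟙 (A ⊗ (B ⊗ C')) else 0)
    (ν : ℕ → (𝟙_ C ⟶ 𝟙_ C)) (hν₀ : ν 0 = 𝟙 (𝟙_ C)) :
    -- the triangle coherence law holds degreewise …
    (∀ (n : ℕ) (A B : C),
      (∑ p ∈ Finset.HasAntidiagonal.antidiagonal n,
          αf p.1 A (𝟙_ C) B ≫ (A ◁ deformedLambda βf ν p.2 B))
        = deformedRho αf ν n A ▷ B) ∧
    -- … together with the bigon `ρ̃_I = λ̃_I`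
    (∀ n : ℕ, deformedRho αf ν n (𝟙_ C) = deformedLambda βf ν n (𝟙_ C)) := by
  constructor
  · intro n A B
    exact congrFun (Stmt12.triangleS (ν := ν) hnat hpent hinv₁ hinv₂ A B) n
  · intro n
    exact congrFun (Stmt12.bigonS (ν := ν) hnat hpent hinv₁ hinv₂) n
end

section
/- In a monoidal category, if ψ_{A,B,C}, φ_{A,B,C} : (A⊗B)⊗C → A⊗(B⊗C) are natural transformations, then the padded composites satisfy ⌈(φ_{A,I,I}⊗B)∘ψ_{A,I,B}⌉ = ⌈ψ_{A,I,B}∘(φ_{A,I,I}⊗B)⌉ and ⌈(A⊗φ_{I,I,B})∘ψ_{A,I,B}⌉ = ⌈ψ_{A,I,B}∘(A⊗φ_{I,I,B})⌉, as maps A⊗B → A⊗B. -/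
/-!
STATEMENT 15: In a monoidal category, for natural transformations
`ψ, φ : (A ⊗ B) ⊗ C ⟶ A ⊗ (B ⊗ C)`, the padded composites
`⌈(φ_{A,I,I} ⊗ B) ∘ ψ_{A,I,B}⌉` and `⌈ψ_{A,I,B} ∘ (φ_{A,I,I} ⊗ B)⌉` agree as endomorphisms of
`A ⊗ B`, and similarly with `A ⊗ φ_{I,I,B}` in place of `φ_{A,I,I} ⊗ B`.  Padding `⌈·⌉` is
realized by explicit composites of unitors and associators reducing everything to `A ⊗ B`.
-/

open CategoryTheory MonoidalCategory

universe v u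

theorem padded_unit_insertions_commute
    {C : Type u} [Category.{v} C] [MonoidalCategory C]
    (ψ φ : ∀ A B C' : C, (A ⊗ B) ⊗ C' ⟶ A ⊗ (B ⊗ C'))
    (hψ : ∀ {A A' B B' C₀ C₀' : C} (f : A ⟶ A') (g : B ⟶ B') (h : C₀ ⟶ C₀'),
      ((f ⊗ₘ g) ⊗ₘ h) ≫ ψ A' B' C₀' = ψ A B C₀ ≫ (f ⊗ₘ (g ⊗ₘ h)))
    (hφ : ∀ {A A' B B' C₀ C₀' : C} (f : A ⟶ A') (g : B ⟶ B') (h : C₀ ⟶ C₀'),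
      ((f ⊗ₘ g) ⊗ₘ h) ≫ φ A' B' C₀' = φ A B C₀ ≫ (f ⊗ₘ (g ⊗ₘ h))) :
    (∀ A B : C,
      ((((ρ_ A).inv ≫ (ρ_ (A ⊗ 𝟙_ C)).inv) ▷ B) ≫ (φ A (𝟙_ C) (𝟙_ C) ▷ B) ≫
          ((A ◁ (λ_ (𝟙_ C)).hom) ▷ B) ≫ ψ A (𝟙_ C) B ≫ (A ◁ (λ_ B).hom)
        = ((ρ_ A).inv ▷ B) ≫ ψ A (𝟙_ C) B ≫ (α_ A (𝟙_ C) B).inv ≫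
            ((ρ_ (A ⊗ 𝟙_ C)).inv ▷ B) ≫ (φ A (𝟙_ C) (𝟙_ C) ▷ B) ≫
            ((A ◁ (λ_ (𝟙_ C)).hom) ▷ B) ≫ ((ρ_ A).hom ▷ B))) ∧
    (∀ A B : C,
      ((A ◁ ((λ_ B).inv ≫ (λ_ (𝟙_ C ⊗ B)).inv ≫ (α_ (𝟙_ C) (𝟙_ C) B).inv)) ≫
          (A ◁ (φ (𝟙_ C) (𝟙_ C) B ≫ (𝟙_ C ◁ (λ_ B).hom))) ≫ (α_ A (𝟙_ C) B).inv ≫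
          ψ A (𝟙_ C) B ≫ (A ◁ (λ_ B).hom)
        = ((ρ_ A).inv ▷ B) ≫ ψ A (𝟙_ C) B ≫
            (A ◁ ((λ_ (𝟙_ C ⊗ B)).inv ≫ (α_ (𝟙_ C) (𝟙_ C) B).inv)) ≫
            (A ◁ (φ (𝟙_ C) (𝟙_ C) B ≫ (λ_ (𝟙_ C ⊗ B)).hom)) ≫ (A ◁ (λ_ B).hom))) := by
  -- naturality (in both variables) of the padded ψ endomorphism of `A ⊗ B`
  have Gnat : ∀ {A A' B B' : C} (f : A ⟶ A') (g : B ⟶ B'),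
      (f ⊗ₘ g) ≫ (((ρ_ A').inv ▷ B') ≫ ψ A' (𝟙_ C) B' ≫ (A' ◁ (λ_ B').hom))
        = (((ρ_ A).inv ▷ B) ≫ ψ A (𝟙_ C) B ≫ (A ◁ (λ_ B).hom)) ≫ (f ⊗ₘ g) := by
    intro A A' B B' f g
    have h1 : (f ⊗ₘ g) ≫ ((ρ_ A').inv ▷ B') = ((ρ_ A).inv ▷ B) ≫ ((f ⊗ₘ 𝟙 (𝟙_ C)) ⊗ₘ g) := by
      simp only [← tensorHom_id, tensorHom_comp_tensorHom, Category.comp_id, Category.id_comp,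
        rightUnitor_inv_naturality]
    have h2 : (f ⊗ₘ (𝟙 (𝟙_ C) ⊗ₘ g)) ≫ (A' ◁ (λ_ B').hom) = (A ◁ (λ_ B).hom) ≫ (f ⊗ₘ g) := by
      simp only [← id_tensorHom, tensorHom_comp_tensorHom, Category.comp_id, Category.id_comp]
      simp only [id_tensorHom, leftUnitor_naturality]
    rw [← Category.assoc, h1, Category.assoc, reassoc_of% hψ f (𝟙 (𝟙_ C)) g, h2]
    simp
  -- key coherence fact
  have htri : ∀ A B : C, (A ◁ (λ_ B).hom) ≫ ((ρ_ A).inv ▷ B) = (α_ A (𝟙_ C) B).inv := by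
    intro A B
    rw [← cancel_epi (α_ A (𝟙_ C) B).hom]
    simp
  constructor
  · intro A B
    calc (((ρ_ A).inv ≫ (ρ_ (A ⊗ 𝟙_ C)).inv) ▷ B) ≫ (φ A (𝟙_ C) (𝟙_ C) ▷ B) ≫
          ((A ◁ (λ_ (𝟙_ C)).hom) ▷ B) ≫ ψ A (𝟙_ C) B ≫ (A ◁ (λ_ B).hom)
        = (((ρ_ A).inv ≫ (ρ_ (A ⊗ 𝟙_ C)).inv ≫ φ A (𝟙_ C) (𝟙_ C) ≫ (A ◁ (λ_ (𝟙_ C)).hom) ≫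
            (ρ_ A).hom) ⊗ₘ 𝟙 B) ≫
          (((ρ_ A).inv ▷ B) ≫ ψ A (𝟙_ C) B ≫ (A ◁ (λ_ B).hom)) := by
          simp only [tensorHom_id, comp_whiskerRight, Category.assoc,
            hom_inv_whiskerRight_assoc]
      _ = (((ρ_ A).inv ▷ B) ≫ ψ A (𝟙_ C) B ≫ (A ◁ (λ_ B).hom)) ≫
          (((ρ_ A).inv ≫ (ρ_ (A ⊗ 𝟙_ C)).inv ≫ φ A (𝟙_ C) (𝟙_ C) ≫ (A ◁ (λ_ (𝟙_ C)).hom) ≫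
            (ρ_ A).hom) ⊗ₘ 𝟙 B) := Gnat _ (𝟙 B)
      _ = ((ρ_ A).inv ▷ B) ≫ ψ A (𝟙_ C) B ≫ (α_ A (𝟙_ C) B).inv ≫
            ((ρ_ (A ⊗ 𝟙_ C)).inv ▷ B) ≫ (φ A (𝟙_ C) (𝟙_ C) ▷ B) ≫
            ((A ◁ (λ_ (𝟙_ C)).hom) ▷ B) ≫ ((ρ_ A).hom ▷ B) := by
          simp only [tensorHom_id, comp_whiskerRight, Category.assoc]
          rw [reassoc_of% htri A B]
  · intro A B
    have hIl : (𝟙_ C ◁ (λ_ B).hom) = (λ_ (𝟙_ C ⊗ B)).hom := by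
      simp [id_whiskerLeft]
    calc (A ◁ ((λ_ B).inv ≫ (λ_ (𝟙_ C ⊗ B)).inv ≫ (α_ (𝟙_ C) (𝟙_ C) B).inv)) ≫
          (A ◁ (φ (𝟙_ C) (𝟙_ C) B ≫ (𝟙_ C ◁ (λ_ B).hom))) ≫ (α_ A (𝟙_ C) B).inv ≫
          ψ A (𝟙_ C) B ≫ (A ◁ (λ_ B).hom)
        = (𝟙 A ⊗ₘ ((λ_ B).inv ≫ (λ_ (𝟙_ C ⊗ B)).inv ≫ (α_ (𝟙_ C) (𝟙_ C) B).inv ≫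
            φ (𝟙_ C) (𝟙_ C) B ≫ (𝟙_ C ◁ (λ_ B).hom) ≫ (λ_ B).hom)) ≫
          (((ρ_ A).inv ▷ B) ≫ ψ A (𝟙_ C) B ≫ (A ◁ (λ_ B).hom)) := by
          simp only [id_tensorHom, MonoidalCategory.whiskerLeft_comp, Category.assoc]
          rw [reassoc_of% htri A B]
      _ = (((ρ_ A).inv ▷ B) ≫ ψ A (𝟙_ C) B ≫ (A ◁ (λ_ B).hom)) ≫
          (𝟙 A ⊗ₘ ((λ_ B).inv ≫ (λ_ (𝟙_ C ⊗ B)).inv ≫ (α_ (𝟙_ C) (𝟙_ C) B).inv ≫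
            φ (𝟙_ C) (𝟙_ C) B ≫ (𝟙_ C ◁ (λ_ B).hom) ≫ (λ_ B).hom)) := Gnat (𝟙 A) _
      _ = ((ρ_ A).inv ▷ B) ≫ ψ A (𝟙_ C) B ≫
            (A ◁ ((λ_ (𝟙_ C ⊗ B)).inv ≫ (α_ (𝟙_ C) (𝟙_ C) B).inv)) ≫
            (A ◁ (φ (𝟙_ C) (𝟙_ C) B ≫ (λ_ (𝟙_ C ⊗ B)).hom)) ≫ (A ◁ (λ_ B).hom) := by
          rw [hIl]
          simp [id_tensorHom, MonoidalCategory.whiskerLeft_comp]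
end

section
/- Let C be a semigroupal category over R and suppose α⁽⁰⁾ = α, α⁽¹⁾, ..., α⁽ᴹ⁻¹⁾ define an (M−1)-st order deformation (so the pentagon holds mod ε^M). Then the obstruction 4-cochain ω⁽ᴹ⁾_{A,B,C,D} = Σ_{i+j=M, 0≤i,j<M} ⌈α⁽ⁱ⁾_{A⊗B,C,D}∘α⁽ʲ⁾_{A,B,C⊗D}⌉ − Σ_{i+j+k=M, 0≤i,j,k<M} ⌈(α⁽ⁱ⁾_{A,B,C}⊗D)∘α⁽ʲ⁾_{A,B⊗C,D}∘(A⊗α⁽ᵏ⁾_{B,C,D})⌉ is a 4-cocycle in X^•(C), i.e., δ(ω⁽ᴹ⁾) = 0. -/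
/-!
STATEMENT 16: For an `(M-1)`-st order deformation `α⁽⁰⁾ = α, α⁽¹⁾, …, α⁽ᴹ⁻¹⁾` of the
associator of a semigroupal category `C` (the pentagon holds mod `ε^M`, i.e.
`δ(α⁽ᴺ⁾) + ω⁽ᴺ⁾ = 0` for all `0 < N < M`), the obstruction `4`-cochain
`ω⁽ᴹ⁾ = Σ_{i+j=M, i,j<M} ⌈α⁽ⁱ⁾_{A⊗B,C,D} ∘ α⁽ʲ⁾_{A,B,C⊗D}⌉
      − Σ_{i+j+k=M, i,j,k<M} ⌈(α⁽ⁱ⁾_{A,B,C} ⊗ D) ∘ α⁽ʲ⁾_{A,B⊗C,D} ∘ (A ⊗ α⁽ᵏ⁾_{B,C,D})⌉`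
is a 4-cocycle: `δ(ω⁽ᴹ⁾) = 0`.
-/

open CategoryTheory MonoidalCategory

set_option maxHeartbeats 1000000

universe v u

variable {C : Type u} [Category.{v} C] [MonoidalCategory C] [Preadditive C]
  [MonoidalPreadditive C]

/-- The deformation coboundary `δφ = Σ_{i=0}^{4} (-1)^{i+1} ∂ᵢ φ` of a `3`-cochain,
with faces padded by prolongations of the associator. -/
def delta3 (φ : ∀ A B C' : C, (A ⊗ B) ⊗ C' ⟶ A ⊗ (B ⊗ C')) (A B C' D : C) :
    ((A ⊗ B) ⊗ C') ⊗ D ⟶ A ⊗ (B ⊗ (C' ⊗ D)) :=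
  - (((α_ A B C').hom ▷ D) ≫ (α_ A (B ⊗ C') D).hom ≫ (A ◁ φ B C' D))
  + (φ (A ⊗ B) C' D ≫ (α_ A B (C' ⊗ D)).hom)
  - (((α_ A B C').hom ▷ D) ≫ φ A (B ⊗ C') D ≫ (A ◁ (α_ B C' D).hom))
  + ((α_ (A ⊗ B) C' D).hom ≫ φ A B (C' ⊗ D))
  - ((φ A B C' ▷ D) ≫ (α_ A (B ⊗ C') D).hom ≫ (A ◁ (α_ B C' D).hom))

/-- The deformation coboundary `δψ = Σ_{i=0}^{5} (-1)^{i+1} ∂ᵢ ψ` of a `4`-cochain,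
with faces padded by prolongations of the associator. -/
def delta4 (ψ : ∀ A B C' D : C, ((A ⊗ B) ⊗ C') ⊗ D ⟶ A ⊗ (B ⊗ (C' ⊗ D)))
    (A B C' D E : C) :
    ((((A ⊗ B) ⊗ C') ⊗ D) ⊗ E) ⟶ A ⊗ (B ⊗ (C' ⊗ (D ⊗ E))) :=
  - (((α_ A B C').hom ▷ D ▷ E) ≫ ((α_ A (B ⊗ C') D).hom ▷ E) ≫
      (α_ A ((B ⊗ C') ⊗ D) E).hom ≫ (A ◁ ψ B C' D E))
  + (ψ (A ⊗ B) C' D E ≫ (α_ A B (C' ⊗ (D ⊗ E))).hom)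
  - (((α_ A B C').hom ▷ D ▷ E) ≫ ψ A (B ⊗ C') D E ≫ (A ◁ (α_ B C' (D ⊗ E)).hom))
  + (((α_ (A ⊗ B) C' D).hom ▷ E) ≫ ψ A B (C' ⊗ D) E ≫ (A ◁ (B ◁ (α_ C' D E).hom)))
  - ((α_ ((A ⊗ B) ⊗ C') D E).hom ≫ ψ A B C' (D ⊗ E))
  + ((ψ A B C' D ▷ E) ≫ (α_ A (B ⊗ (C' ⊗ D)) E).hom ≫
      (A ◁ (α_ B (C' ⊗ D) E).hom) ≫ (A ◁ (B ◁ (α_ C' D E).hom)))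

/-- The obstruction `4`-cochain `ω⁽ᴺ⁾` associated to a family `α⁽⁰⁾, α⁽¹⁾, …`. -/
def obstruction (αf : ℕ → ∀ A B C' : C, (A ⊗ B) ⊗ C' ⟶ A ⊗ (B ⊗ C')) (N : ℕ)
    (A B C' D : C) : ((A ⊗ B) ⊗ C') ⊗ D ⟶ A ⊗ (B ⊗ (C' ⊗ D)) :=
  (∑ p ∈ (Finset.HasAntidiagonal.antidiagonal N).filter (fun p => p.1 < N ∧ p.2 < N),
      αf p.1 (A ⊗ B) C' D ≫ αf p.2 A B (C' ⊗ D))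
  - (∑ p ∈ Finset.HasAntidiagonal.antidiagonal N, ∑ q ∈ Finset.HasAntidiagonal.antidiagonal p.2,
      if p.1 < N ∧ q.1 < N ∧ q.2 < N then
        (αf p.1 A B C' ▷ D) ≫ αf q.1 A (B ⊗ C') D ≫ (A ◁ αf q.2 B C' D)
      else 0)

set_option linter.unusedSectionVars false

namespace Obst

variable {C : Type u} [Category.{v} C] [MonoidalCategory C] [Preadditive C]
  [MonoidalPreadditive C]

abbrev S (X Y : C) := ℕ → (X ⟶ Y)

def cmp {X Y Z : C} (f : S X Y) (g : S Y Z) : S X Z :=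
  fun n => ∑ p ∈ Finset.HasAntidiagonal.antidiagonal n, f p.1 ≫ g p.2

def wl (X : C) {Y Z : C} (f : S Y Z) : S (X ⊗ Y) (X ⊗ Z) := fun n => X ◁ f n
def wr {Y Z : C} (f : S Y Z) (X : C) : S (Y ⊗ X) (Z ⊗ X) := fun n => f n ▷ X

theorem cmp_assoc {X Y Z W : C} (f : S X Y) (g : S Y Z) (h : S Z W) :
    cmp (cmp f g) h = cmp f (cmp g h) := by
  funext n
  simp only [cmp, Preadditive.sum_comp, Preadditive.comp_sum, Category.assoc]
  rw [Finset.sum_sigma', Finset.sum_sigma']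
  apply Finset.sum_nbij' (i := fun x => (⟨(x.2.1, x.2.2 + x.1.2), (x.2.2, x.1.2)⟩ :
      (_ : ℕ × ℕ) × (ℕ × ℕ)))
    (j := fun x => ⟨(x.1.1 + x.2.1, x.2.2), (x.1.1, x.2.1)⟩)
  · rintro ⟨⟨a,b⟩,⟨c,d⟩⟩ hx; simp at hx ⊢; omega
  · rintro ⟨⟨a,b⟩,⟨c,d⟩⟩ hx; simp at hx ⊢; omega
  · rintro ⟨⟨a,b⟩,⟨c,d⟩⟩ hx; simp at hx ⊢; omega
  · rintro ⟨⟨a,b⟩,⟨c,d⟩⟩ hx; simp at hx ⊢; omega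
  · rintro ⟨⟨a,b⟩,⟨c,d⟩⟩ hx; rfl

theorem cmp_sub_left {X Y Z : C} (f g : S X Y) (h : S Y Z) :
    cmp (f - g) h = cmp f h - cmp g h := by
  funext n
  simp [cmp, Preadditive.sub_comp, Finset.sum_sub_distrib]

theorem cmp_sub_right {X Y Z : C} (f : S X Y) (g h : S Y Z) :
    cmp f (g - h) = cmp f g - cmp f h := by
  funext n
  simp [cmp, Preadditive.comp_sub, Finset.sum_sub_distrib]

theorem wl_cmp (X : C) {Y Z W : C} (f : S Y Z) (g : S Z W) :
    wl X (cmp f g) = cmp (wl X f) (wl X g) := by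
  funext n
  simp [wl, cmp, whiskerLeft_sum, MonoidalCategory.whiskerLeft_comp]

theorem wr_cmp {Y Z W : C} (f : S Y Z) (g : S Z W) (X : C) :
    wr (cmp f g) X = cmp (wr f X) (wr g X) := by
  funext n
  simp [wr, cmp, sum_whiskerRight, MonoidalCategory.comp_whiskerRight]

theorem wl_sub (X : C) {Y Z : C} (f g : S Y Z) : wl X (f - g) = wl X f - wl X g := by
  funext n; exact map_sub (((tensoringLeft C).obj X).mapAddHom) (f n) (g n)

theorem wr_sub {Y Z : C} (f g : S Y Z) (X : C) : wr (f - g) X = wr f X - wr g X := by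
  funext n; exact map_sub (((tensoringRight C).obj X).mapAddHom) (f n) (g n)


section Main

variable (M : ℕ) (αf : ℕ → ∀ A B C' : C, (A ⊗ B) ⊗ C' ⟶ A ⊗ (B ⊗ C'))

/-- truncated series associator -/
def βs (A B C' : C) : S ((A ⊗ B) ⊗ C') (A ⊗ (B ⊗ C')) :=
  fun n => if n < M then αf n A B C' else 0

variable (hnat : ∀ (i : ℕ) {A A' B B' X X' : C} (f : A ⟶ A') (g : B ⟶ B') (h : X ⟶ X'),
      ((f ⊗ₘ g) ⊗ₘ h) ≫ αf i A' B' X' = αf i A B X ≫ (f ⊗ₘ (g ⊗ₘ h)))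

section Nat

include hnat

theorem nat1 (A B C' D E : C) (k m : ℕ) :
    ((A ◁ βs M αf B C' D k) ▷ E) ≫ βs M αf A (B ⊗ (C' ⊗ D)) E m
      = βs M αf A ((B ⊗ C') ⊗ D) E m ≫ (A ◁ (βs M αf B C' D k ▷ E)) := by
  unfold βs
  by_cases hk : k < M <;> by_cases hm : m < M <;> simp [hk, hm]
  have := hnat m (𝟙 A) (αf k B C' D) (𝟙 E)
  simpa using this

theorem nat2 (A B C' D E : C) (k m : ℕ) :
    ((βs M αf A B C' k ▷ D) ▷ E) ≫ βs M αf (A ⊗ (B ⊗ C')) D E m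
      = βs M αf ((A ⊗ B) ⊗ C') D E m ≫ (βs M αf A B C' k ▷ (D ⊗ E)) := by
  unfold βs
  by_cases hk : k < M <;> by_cases hm : m < M <;> simp [hk, hm]
  have := hnat m (αf k A B C') (𝟙 D) (𝟙 E)
  simpa using this

theorem nat3 (A B C' D E : C) (k m : ℕ) :
    ((A ⊗ B) ◁ βs M αf C' D E k) ≫ βs M αf A B (C' ⊗ (D ⊗ E)) m
      = βs M αf A B ((C' ⊗ D) ⊗ E) m ≫ (A ◁ (B ◁ βs M αf C' D E k)) := by
  unfold βs
  by_cases hk : k < M <;> by_cases hm : m < M <;> simp [hk, hm]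
  have := hnat m (𝟙 A) (𝟙 B) (αf k C' D E)
  simpa using this

theorem nat1S (A B C' D E : C) :
    cmp (wr (wl A (βs M αf B C' D)) E) (βs M αf A (B ⊗ (C' ⊗ D)) E)
      = cmp (βs M αf A ((B ⊗ C') ⊗ D) E) (wl A (wr (βs M αf B C' D) E)) := by
  funext n
  show ∑ p ∈ Finset.HasAntidiagonal.antidiagonal n, _ = ∑ p ∈ Finset.HasAntidiagonal.antidiagonal n, _
  simp only [wl, wr]
  rw [← Finset.Nat.sum_antidiagonal_swap (f := fun p =>
    βs M αf A ((B ⊗ C') ⊗ D) E p.1 ≫ (A ◁ (βs M αf B C' D p.2 ▷ E)))]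
  exact Finset.sum_congr rfl fun p _ => nat1 M αf hnat A B C' D E p.1 p.2

theorem nat2S (A B C' D E : C) :
    cmp (wr (wr (βs M αf A B C') D) E) (βs M αf (A ⊗ (B ⊗ C')) D E)
      = cmp (βs M αf ((A ⊗ B) ⊗ C') D E) (wr (βs M αf A B C') (D ⊗ E)) := by
  funext n
  show ∑ p ∈ Finset.HasAntidiagonal.antidiagonal n, _ = ∑ p ∈ Finset.HasAntidiagonal.antidiagonal n, _
  simp only [wl, wr]
  rw [← Finset.Nat.sum_antidiagonal_swap (f := fun p =>
    βs M αf ((A ⊗ B) ⊗ C') D E p.1 ≫ (βs M αf A B C' p.2 ▷ (D ⊗ E)))]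
  exact Finset.sum_congr rfl fun p _ => nat2 M αf hnat A B C' D E p.1 p.2

theorem nat3S (A B C' D E : C) :
    cmp (wl (A ⊗ B) (βs M αf C' D E)) (βs M αf A B (C' ⊗ (D ⊗ E)))
      = cmp (βs M αf A B ((C' ⊗ D) ⊗ E)) (wl A (wl B (βs M αf C' D E))) := by
  funext n
  show ∑ p ∈ Finset.HasAntidiagonal.antidiagonal n, _ = ∑ p ∈ Finset.HasAntidiagonal.antidiagonal n, _
  simp only [wl, wr]
  rw [← Finset.Nat.sum_antidiagonal_swap (f := fun p =>
    βs M αf A B ((C' ⊗ D) ⊗ E) p.1 ≫ (A ◁ (B ◁ βs M αf C' D E p.2)))]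
  exact Finset.sum_congr rfl fun p _ => nat3 M αf hnat A B C' D E p.1 p.2

/-- tail versions -/
theorem nat1S' (A B C' D E : C) {W : C} (R : S (A ⊗ ((B ⊗ (C' ⊗ D)) ⊗ E)) W) :
    cmp (wr (wl A (βs M αf B C' D)) E) (cmp (βs M αf A (B ⊗ (C' ⊗ D)) E) R)
      = cmp (βs M αf A ((B ⊗ C') ⊗ D) E) (cmp (wl A (wr (βs M αf B C' D) E)) R) := by
  rw [← cmp_assoc, nat1S M αf hnat, cmp_assoc]

theorem nat2S' (A B C' D E : C) {W : C} (R : S ((A ⊗ (B ⊗ C')) ⊗ (D ⊗ E)) W) :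
    cmp (wr (wr (βs M αf A B C') D) E) (cmp (βs M αf (A ⊗ (B ⊗ C')) D E) R)
      = cmp (βs M αf ((A ⊗ B) ⊗ C') D E) (cmp (wr (βs M αf A B C') (D ⊗ E)) R) := by
  rw [← cmp_assoc, nat2S M αf hnat, cmp_assoc]

end Nat

/-- evaluation of convolution at 0 -/
theorem cmp_zero {X Y Z : C} (f : S X Y) (g : S Y Z) : cmp f g 0 = f 0 ≫ g 0 := by
  simp [cmp]

theorem cmp_eval_right {X Y Z : C} (f : S X Y) (g : S Y Z) (hg : ∀ n, n < M → g n = 0) :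
    cmp f g M = f 0 ≫ g M := by
  rw [cmp]
  rw [Finset.sum_eq_single ((0 : ℕ), M)]
  · rintro ⟨a, b⟩ hb hne
    simp only [Finset.HasAntidiagonal.mem_antidiagonal] at hb
    have : b < M := by
      rcases Nat.lt_or_ge b M with h | h
      · exact h
      · exfalso; apply hne; have : b = M := by omega
        simp [Prod.ext_iff]; omega
    rw [hg b this, Limits.comp_zero]
  · intro h
    exfalso; apply h; simp

theorem cmp_eval_left {X Y Z : C} (f : S X Y) (g : S Y Z) (hf : ∀ n, n < M → f n = 0) :
    cmp f g M = f M ≫ g 0 := by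
  rw [cmp]
  rw [Finset.sum_eq_single ((M : ℕ), 0)]
  · rintro ⟨a, b⟩ hb hne
    simp only [Finset.HasAntidiagonal.mem_antidiagonal] at hb
    have : a < M := by
      rcases Nat.lt_or_ge a M with h | h
      · exact h
      · exfalso; apply hne; have : a = M := by omega
        simp [Prod.ext_iff]; omega
    rw [hf a this, Limits.zero_comp]
  · intro h
    exfalso; apply h; simp

theorem low_cmp_right {X Y Z : C} (f : S X Y) (g : S Y Z) (hg : ∀ n, n < M → g n = 0) :
    ∀ n, n < M → cmp f g n = 0 := by
  intro n hn
  rw [cmp]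
  apply Finset.sum_eq_zero
  rintro ⟨a, b⟩ hb
  simp only [Finset.HasAntidiagonal.mem_antidiagonal] at hb
  rw [hg b (by omega), Limits.comp_zero]

theorem low_cmp_left {X Y Z : C} (f : S X Y) (g : S Y Z) (hf : ∀ n, n < M → f n = 0) :
    ∀ n, n < M → cmp f g n = 0 := by
  intro n hn
  rw [cmp]
  apply Finset.sum_eq_zero
  rintro ⟨a, b⟩ hb
  simp only [Finset.HasAntidiagonal.mem_antidiagonal] at hb
  rw [hf a (by omega), Limits.zero_comp]

theorem low_wl {Y Z : C} (X : C) (g : S Y Z) (hg : ∀ n, n < M → g n = 0) :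
    ∀ n, n < M → wl X g n = 0 := by
  intro n hn; simp [wl, hg n hn]

theorem low_wr {Y Z : C} (g : S Y Z) (X : C) (hg : ∀ n, n < M → g n = 0) :
    ∀ n, n < M → wr g X n = 0 := by
  intro n hn; simp [wr, hg n hn]

/-- the pentagon-defect series -/
def Pent (A B C' D : C) : S (((A ⊗ B) ⊗ C') ⊗ D) (A ⊗ (B ⊗ (C' ⊗ D))) :=
  cmp (βs M αf (A ⊗ B) C' D) (βs M αf A B (C' ⊗ D))
    - cmp (wr (βs M αf A B C') D) (cmp (βs M αf A (B ⊗ C') D) (wl A (βs M αf B C' D)))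


section PentEval

variable (hM : 0 < M) (hα₀ : ∀ A B C' : C, αf 0 A B C' = (α_ A B C').hom)

/-- decomposition of the antidiagonal of `n > 0` into the two extreme points and the interior -/
theorem antidiag_split (n : ℕ) (hn : 0 < n) :
    Finset.HasAntidiagonal.antidiagonal n
      = insert ((n : ℕ), (0 : ℕ)) (insert ((0 : ℕ), n)
          ((Finset.HasAntidiagonal.antidiagonal n).filter fun p => p.1 < n ∧ p.2 < n)) := by
  ext ⟨a, b⟩
  simp only [Finset.mem_insert, Finset.mem_filter, Finset.HasAntidiagonal.mem_antidiagonal, Prod.mk.injEq]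
  omega

theorem notmem1 (n : ℕ) (hn : 0 < n) :
    ((n : ℕ), (0 : ℕ)) ∉ insert ((0 : ℕ), n)
      ((Finset.HasAntidiagonal.antidiagonal n).filter fun p => p.1 < n ∧ p.2 < n) := by
  simp only [Finset.mem_insert, Finset.mem_filter, Finset.HasAntidiagonal.mem_antidiagonal, Prod.mk.injEq]
  omega

theorem notmem2 (n : ℕ) (hn : 0 < n) :
    ((0 : ℕ), n) ∉ (Finset.HasAntidiagonal.antidiagonal n).filter fun p => p.1 < n ∧ p.2 < n := by
  simp only [Finset.mem_filter, Finset.HasAntidiagonal.mem_antidiagonal]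
  omega

include hM hα₀ in
theorem pent_eval (n : ℕ) (hn : 0 < n) (hnM : n ≤ M) (A B C' D : C) :
    Pent M αf A B C' D n
      = delta3 (fun X Y Z => βs M αf X Y Z n) A B C' D
        + obstruction αf n A B C' D := by
  have hβ : ∀ (k : ℕ), k < n → ∀ X Y Z : C, βs M αf X Y Z k = αf k X Y Z :=
    fun k hk X Y Z => if_pos (lt_of_lt_of_le hk hnM)
  have hβ0 : ∀ X Y Z : C, βs M αf X Y Z 0 = αf 0 X Y Z := fun X Y Z => if_pos hM
  have S1 : cmp (βs M αf (A ⊗ B) C' D) (βs M αf A B (C' ⊗ D)) n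
      = βs M αf (A ⊗ B) C' D n ≫ αf 0 A B (C' ⊗ D)
        + αf 0 (A ⊗ B) C' D ≫ βs M αf A B (C' ⊗ D) n
        + (∑ p ∈ (Finset.HasAntidiagonal.antidiagonal n).filter (fun p => p.1 < n ∧ p.2 < n),
            αf p.1 (A ⊗ B) C' D ≫ αf p.2 A B (C' ⊗ D)) := by
    rw [cmp]
    conv_lhs => rw [antidiag_split n hn]
    rw [Finset.sum_insert (notmem1 n hn), Finset.sum_insert (notmem2 n hn), ← add_assoc]
    dsimp only
    rw [hβ0, hβ0]
    congr 1
    apply Finset.sum_congr rfl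
    rintro ⟨a, b⟩ hp
    simp only [Finset.mem_filter, Finset.HasAntidiagonal.mem_antidiagonal] at hp
    rw [hβ a hp.2.1, hβ b hp.2.2]
  have S2 : cmp (wr (βs M αf A B C') D)
        (cmp (βs M αf A (B ⊗ C') D) (wl A (βs M αf B C' D))) n
      = (βs M αf A B C' n ▷ D) ≫ αf 0 A (B ⊗ C') D ≫ (A ◁ αf 0 B C' D)
        + (αf 0 A B C' ▷ D) ≫ βs M αf A (B ⊗ C') D n ≫ (A ◁ αf 0 B C' D)
        + (αf 0 A B C' ▷ D) ≫ αf 0 A (B ⊗ C') D ≫ (A ◁ βs M αf B C' D n)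
        + (∑ p ∈ Finset.HasAntidiagonal.antidiagonal n, ∑ q ∈ Finset.HasAntidiagonal.antidiagonal p.2,
            if p.1 < n ∧ q.1 < n ∧ q.2 < n then
              (αf p.1 A B C' ▷ D) ≫ αf q.1 A (B ⊗ C') D ≫ (A ◁ αf q.2 B C' D)
            else 0) := by
    have h2 : cmp (βs M αf A (B ⊗ C') D) (wl A (βs M αf B C' D)) n
        = βs M αf A (B ⊗ C') D n ≫ (A ◁ αf 0 B C' D)
          + αf 0 A (B ⊗ C') D ≫ (A ◁ βs M αf B C' D n)
          + ∑ q ∈ (Finset.HasAntidiagonal.antidiagonal n).filter (fun q => q.1 < n ∧ q.2 < n),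
              αf q.1 A (B ⊗ C') D ≫ (A ◁ αf q.2 B C' D) := by
      rw [cmp]
      conv_lhs => rw [antidiag_split n hn]
      rw [Finset.sum_insert (notmem1 n hn), Finset.sum_insert (notmem2 n hn), ← add_assoc]
      dsimp only [wl]
      rw [hβ0, hβ0]
      congr 1
      apply Finset.sum_congr rfl
      rintro ⟨a, b⟩ hp
      simp only [Finset.mem_filter, Finset.HasAntidiagonal.mem_antidiagonal] at hp
      rw [hβ a hp.2.1, hβ b hp.2.2]
    have h1 : cmp (βs M αf A (B ⊗ C') D) (wl A (βs M αf B C' D)) 0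
        = αf 0 A (B ⊗ C') D ≫ (A ◁ αf 0 B C' D) := by
      rw [cmp_zero]
      dsimp only [wl]
      rw [hβ0, hβ0]
    rw [cmp]
    conv_lhs => rw [antidiag_split n hn]
    rw [Finset.sum_insert (notmem1 n hn), Finset.sum_insert (notmem2 n hn)]
    dsimp only [wr]
    rw [h1, h2, hβ0]
    rw [Preadditive.comp_add, Preadditive.comp_add, Preadditive.comp_sum]
    have ht3 : ∀ x ∈ (Finset.HasAntidiagonal.antidiagonal n).filter (fun p => p.1 < n ∧ p.2 < n),
        βs M αf A B C' x.1 ▷ D ≫ cmp (βs M αf A (B ⊗ C') D) (wl A (βs M αf B C' D)) x.2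
          = ∑ q ∈ Finset.HasAntidiagonal.antidiagonal x.2,
              (αf x.1 A B C' ▷ D) ≫ αf q.1 A (B ⊗ C') D ≫ (A ◁ αf q.2 B C' D) := by
      rintro ⟨a, b⟩ hx
      simp only [Finset.mem_filter, Finset.HasAntidiagonal.mem_antidiagonal] at hx
      rw [hβ a hx.2.1, cmp, Preadditive.comp_sum]
      apply Finset.sum_congr rfl
      rintro ⟨c, d⟩ hq
      simp only [Finset.HasAntidiagonal.mem_antidiagonal] at hq
      dsimp only [wl]
      rw [hβ c (by omega), hβ d (by omega)]
    rw [Finset.sum_congr rfl ht3]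
    -- now expand the right-hand side nested sum
    conv_rhs => rw [antidiag_split n hn]
    rw [Finset.sum_insert (notmem1 n hn), Finset.sum_insert (notmem2 n hn)]
    dsimp only
    have hp1 : (∑ q ∈ Finset.HasAntidiagonal.antidiagonal (0:ℕ),
        if n < n ∧ q.1 < n ∧ q.2 < n then
          (αf n A B C' ▷ D) ≫ αf q.1 A (B ⊗ C') D ≫ (A ◁ αf q.2 B C' D) else 0) = 0 := by
      apply Finset.sum_eq_zero; intro q hq; rw [if_neg (by omega)]
    have hp2 : (∑ q ∈ Finset.HasAntidiagonal.antidiagonal n,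
        if (0:ℕ) < n ∧ q.1 < n ∧ q.2 < n then
          (αf 0 A B C' ▷ D) ≫ αf q.1 A (B ⊗ C') D ≫ (A ◁ αf q.2 B C' D) else 0)
        = ∑ q ∈ (Finset.HasAntidiagonal.antidiagonal n).filter (fun q => q.1 < n ∧ q.2 < n),
            (αf 0 A B C' ▷ D) ≫ αf q.1 A (B ⊗ C') D ≫ (A ◁ αf q.2 B C' D) := by
      rw [Finset.sum_filter]
      apply Finset.sum_congr rfl
      intro q hq
      by_cases hc : q.1 < n ∧ q.2 < n
      · rw [if_pos hc, if_pos ⟨hn, hc.1, hc.2⟩]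
      · rw [if_neg hc, if_neg (by tauto)]
    have hp3 : ∀ x ∈ (Finset.HasAntidiagonal.antidiagonal n).filter (fun p => p.1 < n ∧ p.2 < n),
        (∑ q ∈ Finset.HasAntidiagonal.antidiagonal x.2,
          if x.1 < n ∧ q.1 < n ∧ q.2 < n then
            (αf x.1 A B C' ▷ D) ≫ αf q.1 A (B ⊗ C') D ≫ (A ◁ αf q.2 B C' D) else 0)
          = ∑ q ∈ Finset.HasAntidiagonal.antidiagonal x.2,
              (αf x.1 A B C' ▷ D) ≫ αf q.1 A (B ⊗ C') D ≫ (A ◁ αf q.2 B C' D) := by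
      rintro ⟨a, b⟩ hx
      simp only [Finset.mem_filter, Finset.HasAntidiagonal.mem_antidiagonal] at hx
      apply Finset.sum_congr rfl
      rintro ⟨c, d⟩ hq
      simp only [Finset.HasAntidiagonal.mem_antidiagonal] at hq
      rw [if_pos ⟨hx.2.1, by omega, by omega⟩]
    rw [hp1, hp2, Finset.sum_congr rfl hp3]
    abel
  rw [Pent, Pi.sub_apply, S1, S2, delta3, obstruction, hα₀, hα₀, hα₀, hα₀, hα₀]
  abel

include hM hα₀ in
theorem pent_M (A B C' D : C) :
    Pent M αf A B C' D M = obstruction αf M A B C' D := by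
  rw [pent_eval M αf hM hα₀ M hM le_rfl A B C' D]
  have h0 : delta3 (fun X Y Z : C => βs M αf X Y Z M) A B C' D = 0 := by
    simp [delta3, βs]
  rw [h0, zero_add]

include hM hα₀ in
theorem pent_low
    (hdef : ∀ N, 0 < N → N < M → ∀ A B C' D : C,
      delta3 (αf N) A B C' D + obstruction αf N A B C' D = 0)
    (A B C' D : C) : ∀ n, n < M → Pent M αf A B C' D n = 0 := by
  intro n hn
  rcases Nat.eq_zero_or_pos n with rfl | hpos
  · rw [Pent, Pi.sub_apply, cmp_zero, cmp_zero, cmp_zero]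
    dsimp only [wl, wr]
    simp only [βs, if_pos hM, hα₀]
    rw [MonoidalCategory.pentagon, sub_self]
  · rw [pent_eval M αf hM hα₀ n hpos (le_of_lt hn) A B C' D]
    have hfam : (fun X Y Z : C => βs M αf X Y Z n) = αf n :=
      funext fun X => funext fun Y => funext fun Z => if_pos hn
    rw [hfam]
    exact hdef n hpos hn A B C' D

end PentEval


section Telescope

include hnat in
theorem Fzero (A B C' D E : C) :
    - (cmp (wr (wr (βs M αf A B C') D) E) (cmp (wr (βs M αf A (B ⊗ C') D) E)
        (cmp (βs M αf A ((B ⊗ C') ⊗ D) E) (wl A (Pent M αf B C' D E)))))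
    + (cmp (Pent M αf (A ⊗ B) C' D E) (βs M αf A B (C' ⊗ (D ⊗ E))))
    - (cmp (wr (wr (βs M αf A B C') D) E) (cmp (Pent M αf A (B ⊗ C') D E)
        (wl A (βs M αf B C' (D ⊗ E)))))
    + (cmp (wr (βs M αf (A ⊗ B) C' D) E) (cmp (Pent M αf A B (C' ⊗ D) E)
        (wl A (wl B (βs M αf C' D E)))))
    - (cmp (βs M αf ((A ⊗ B) ⊗ C') D E) (Pent M αf A B C' (D ⊗ E)))
    + (cmp (wr (Pent M αf A B C' D) E) (cmp (βs M αf A (B ⊗ (C' ⊗ D)) E)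
        (cmp (wl A (βs M αf B (C' ⊗ D) E)) (wl A (wl B (βs M αf C' D E))))))
    = 0 := by
  simp only [Pent, cmp_sub_left, cmp_sub_right, wl_sub, wr_sub, wl_cmp, wr_cmp, cmp_assoc]
  rw [← nat1S' M αf hnat A B C' D E, nat2S' M αf hnat A B C' D E, nat3S M αf hnat A B C' D E]
  abel

end Telescope


section Final

variable (hM : 0 < M) (hα₀ : ∀ A B C' : C, αf 0 A B C' = (α_ A B C').hom)

include hM hα₀ hnat in
theorem final
    (hdef : ∀ N, 0 < N → N < M → ∀ A B C' D : C,
      delta3 (αf N) A B C' D + obstruction αf N A B C' D = 0)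
    (A B C' D E : C) : delta4 (obstruction αf M) A B C' D E = 0 := by
  have hP : ∀ (X Y Z W : C) n, n < M → Pent M αf X Y Z W n = 0 := fun X Y Z W =>
    pent_low M αf hM hα₀ hdef X Y Z W
  have hβ0 : ∀ X Y Z : C, βs M αf X Y Z 0 = (α_ X Y Z).hom := by
    intro X Y Z; simp [βs, hM, hα₀]
  have key := congrFun (Fzero M αf hnat A B C' D E) M
  simp only [Pi.add_apply, Pi.sub_apply, Pi.neg_apply, Pi.zero_apply] at key
  have e1 : (cmp (wr (wr (βs M αf A B C') D) E) (cmp (wr (βs M αf A (B ⊗ C') D) E)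
        (cmp (βs M αf A ((B ⊗ C') ⊗ D) E) (wl A (Pent M αf B C' D E))))) M
      = ((α_ A B C').hom ▷ D ▷ E) ≫ ((α_ A (B ⊗ C') D).hom ▷ E) ≫
          (α_ A ((B ⊗ C') ⊗ D) E).hom ≫ (A ◁ obstruction αf M B C' D E) := by
    have l0 := low_wl M A (Pent M αf B C' D E) (hP B C' D E)
    have l1 := low_cmp_right M (βs M αf A ((B ⊗ C') ⊗ D) E) _ l0
    have l2 := low_cmp_right M (wr (βs M αf A (B ⊗ C') D) E) _ l1
    rw [cmp_eval_right M _ _ l2, cmp_eval_right M _ _ l1, cmp_eval_right M _ _ l0]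
    dsimp only [wr, wl]
    rw [hβ0, hβ0, hβ0, pent_M M αf hM hα₀ B C' D E]
  have e2 : (cmp (Pent M αf (A ⊗ B) C' D E) (βs M αf A B (C' ⊗ (D ⊗ E)))) M
      = obstruction αf M (A ⊗ B) C' D E ≫ (α_ A B (C' ⊗ (D ⊗ E))).hom := by
    rw [cmp_eval_left M _ _ (hP (A ⊗ B) C' D E), hβ0,
      pent_M M αf hM hα₀ (A ⊗ B) C' D E]
  have e3 : (cmp (wr (wr (βs M αf A B C') D) E) (cmp (Pent M αf A (B ⊗ C') D E)
        (wl A (βs M αf B C' (D ⊗ E))))) M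
      = ((α_ A B C').hom ▷ D ▷ E) ≫ obstruction αf M A (B ⊗ C') D E ≫
          (A ◁ (α_ B C' (D ⊗ E)).hom) := by
    have l0 := hP A (B ⊗ C') D E
    have l1 := low_cmp_left M (Pent M αf A (B ⊗ C') D E)
      (wl A (βs M αf B C' (D ⊗ E))) l0
    rw [cmp_eval_right M _ _ l1, cmp_eval_left M _ _ l0]
    dsimp only [wr, wl]
    rw [hβ0, hβ0, pent_M M αf hM hα₀ A (B ⊗ C') D E]
  have e4 : (cmp (wr (βs M αf (A ⊗ B) C' D) E) (cmp (Pent M αf A B (C' ⊗ D) E)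
        (wl A (wl B (βs M αf C' D E))))) M
      = ((α_ (A ⊗ B) C' D).hom ▷ E) ≫ obstruction αf M A B (C' ⊗ D) E ≫
          (A ◁ (B ◁ (α_ C' D E).hom)) := by
    have l0 := hP A B (C' ⊗ D) E
    have l1 := low_cmp_left M (Pent M αf A B (C' ⊗ D) E)
      (wl A (wl B (βs M αf C' D E))) l0
    rw [cmp_eval_right M _ _ l1, cmp_eval_left M _ _ l0]
    dsimp only [wr, wl]
    rw [hβ0, hβ0, pent_M M αf hM hα₀ A B (C' ⊗ D) E]
  have e5 : (cmp (βs M αf ((A ⊗ B) ⊗ C') D E) (Pent M αf A B C' (D ⊗ E))) M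
      = (α_ ((A ⊗ B) ⊗ C') D E).hom ≫ obstruction αf M A B C' (D ⊗ E) := by
    rw [cmp_eval_right M _ _ (hP A B C' (D ⊗ E)), hβ0,
      pent_M M αf hM hα₀ A B C' (D ⊗ E)]
  have e6 : (cmp (wr (Pent M αf A B C' D) E) (cmp (βs M αf A (B ⊗ (C' ⊗ D)) E)
        (cmp (wl A (βs M αf B (C' ⊗ D) E)) (wl A (wl B (βs M αf C' D E)))))) M
      = (obstruction αf M A B C' D ▷ E) ≫ (α_ A (B ⊗ (C' ⊗ D)) E).hom ≫
          (A ◁ (α_ B (C' ⊗ D) E).hom) ≫ (A ◁ (B ◁ (α_ C' D E).hom)) := by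
    have l0 := low_wr M (Pent M αf A B C' D) E (hP A B C' D)
    rw [cmp_eval_left M _ _ l0, cmp_zero, cmp_zero]
    dsimp only [wr, wl]
    rw [hβ0, hβ0, hβ0, pent_M M αf hM hα₀ A B C' D]
  rw [e1, e2, e3, e4, e5, e6] at key
  rw [delta4]
  linear_combination (norm := abel) key

end Final

end Main

end Obst

theorem obstruction_is_cocycle
    (M : ℕ) (hM : 0 < M)
    (αf : ℕ → ∀ A B C' : C, (A ⊗ B) ⊗ C' ⟶ A ⊗ (B ⊗ C'))
    (hα₀ : ∀ A B C' : C, αf 0 A B C' = (α_ A B C').hom)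
    (hnat : ∀ (i : ℕ) {A A' B B' X X' : C} (f : A ⟶ A') (g : B ⟶ B') (h : X ⟶ X'),
      ((f ⊗ₘ g) ⊗ₘ h) ≫ αf i A' B' X' = αf i A B X ≫ (f ⊗ₘ (g ⊗ₘ h)))
    (hdef : ∀ N, 0 < N → N < M → ∀ A B C' D : C,
      delta3 (αf N) A B C' D + obstruction αf N A B C' D = 0) :
    ∀ A B C' D E : C, delta4 (obstruction αf M) A B C' D E = 0 := by
  intro A B C' D E
  exact Obst.final M αf hnat hM hα₀ hdef A B C' D E
end
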